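/- arXiv:0812.4834 — 2 statements merged into one kernel-verified Lean document; each statement's English description precedes it below -/
import Mathlib

section
/- Monotonicity in the ferromagnetic couplings (consequence of (3.15), Griffiths' second inequality): Let N ≥ 1, 0 < β < ∞, h ≥ 0, λ ≥ 0, and let K, K' : T_N × T_N → ℝ≥0 be two symmetric coupling matrices with K_{ij} ≤ K'_{ij} for all i, j. Let H(K) be the Hamiltonian given by −H(K) = (1/2)·Σ_{i,j ∈ T_N} K_{ij} σ̂ᶻ_i σ̂ᶻ_j + h·Σ_{i ∈ T_N} σ̂ᶻ_i + λ·Σ_{i ∈ T_N} Σ̂ˣ_i, and similarly H(K'). Then for every site u ∈ T_N, Tr(σ̂ᶻ_u · exp(−βH(K))) / Tr(exp(−βH(K))) ≤ Tr(σ̂ᶻ_u · exp(−βH(K'))) / Tr(exp(−βH(K'))). -/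
open Matrix

noncomputable section

/-- Spin configurations on the discrete torus `(ℤ/Nℤ)^d`. -/
abbrev Cfg (d N : ℕ) := (Fin d → ZMod N) → Bool

/-- Operators: complex matrices indexed by spin configurations. -/
abbrev Op (d N : ℕ) := Matrix (Cfg d N) (Cfg d N) ℂ

/-- The Pauli-z operator at site `i`. -/
def sigmaZ (d N : ℕ) [NeZero N] (i : Fin d → ZMod N) : Op d N :=
  Matrix.diagonal (fun σ => if σ i then 1 else -1)

/-- The Pauli-x operator at site `i`. -/
def sigmaX (d N : ℕ) [NeZero N] (i : Fin d → ZMod N) : Op d N :=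
  Matrix.of fun σ τ => if τ = Function.update σ i (!σ i) then 1 else 0

/-- `Σ̂ˣ_i = (I + σ̂ˣ_i)/2`. -/
def SigX (d N : ℕ) [NeZero N] (i : Fin d → ZMod N) : Op d N :=
  (2 : ℂ)⁻¹ • (1 + sigmaX d N i)

/-- The representative of `a : ZMod N` of absolute value at most `N/2`. -/
def zrep (N : ℕ) [NeZero N] (a : ZMod N) : ℤ :=
  if 2 * a.val ≤ N then (a.val : ℤ) else (a.val : ℤ) - N

/-- Coordinatewise representative of a point of the torus, all coordinates
of absolute value at most `N/2`. -/
def torusRep (d N : ℕ) [NeZero N] (v : Fin d → ZMod N) : Fin d → ℤ :=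
  fun k => zrep N (v k)

/-- Sup-norm of a point of `ℤ^d`. -/
def znorm (d : ℕ) (x : Fin d → ℤ) : ℕ :=
  Finset.univ.sup fun k => (x k).natAbs

/-- Torus couplings induced from an interaction `J` on `ℤ^d`. -/
def JN (d : ℕ) (J : (Fin d → ℤ) → ℝ) (N : ℕ) [NeZero N] (i j : Fin d → ZMod N) : ℝ :=
  J (torusRep d N (i - j))

/-- Torus distance: minimum of `|x|` over representatives `x ∈ ℤ^d` of `i - j`. -/
def torusDist (d N : ℕ) [NeZero N] (i j : Fin d → ZMod N) : ℕ :=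
  sInf { r : ℕ | ∃ x : Fin d → ℤ,
    (∀ k, ((x k : ZMod N) = (i - j) k)) ∧ znorm d x = r }

/-- The transverse field Ising Hamiltonian `H` with
`-H = (ρ/2)·Σ_{i,j} J_{ij} σ̂ᶻ_i σ̂ᶻ_j + h·Σ_i σ̂ᶻ_i + λ·Σ_i Σ̂ˣ_i`. -/
def Ham (d : ℕ) (J : (Fin d → ℤ) → ℝ) (N : ℕ) [NeZero N] (h ρ lam : ℝ) : Op d N :=
  -((((ρ / 2 : ℝ) : ℂ)) • ∑ i, ∑ j, ((JN d J N i j : ℝ) : ℂ) • (sigmaZ d N i * sigmaZ d N j)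
    + ((h : ℝ) : ℂ) • ∑ i, sigmaZ d N i
    + ((lam : ℝ) : ℂ) • ∑ i, SigX d N i)

/-- `exp(−tH)` (matrix exponential). -/
def expH (d N : ℕ) [NeZero N] (H : Op d N) (t : ℝ) : Op d N :=
  NormedSpace.exp ((-(t : ℂ)) • H)

/-- Thermal expectation `⟨A⟩ = Tr(A e^{-βH})/Tr(e^{-βH})` (real part). -/
def texp (d N : ℕ) [NeZero N] (H : Op d N) (β : ℝ) (A : Op d N) : ℝ :=
  ((A * expH d N H β).trace / (expH d N H β).trace).re

/-- Truncated correlation `⟨A;B⟩ = ⟨AB⟩ − ⟨A⟩⟨B⟩`. -/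
def tcorr (d N : ℕ) [NeZero N] (H : Op d N) (β : ℝ) (A B : Op d N) : ℝ :=
  texp d N H β (A * B) - texp d N H β A * texp d N H β B

/-- Hypotheses on the interaction `J`: nonnegative, symmetric, finite range `R`,
irreducible, and `J 0 = 0`. -/
structure Interaction (d : ℕ) (J : (Fin d → ℤ) → ℝ) (R : ℕ) : Prop where
  nonneg : ∀ x, 0 ≤ J x
  symm : ∀ x, J (-x) = J x
  finite_range : ∀ x, R < znorm d x → J x = 0
  irreducible : AddSubgroup.closure { x | 0 < J x } = ⊤
  zero : J 0 = 0

/-- Imaginary-time two-point function: `Tr(A·e^{−gap·H}·B·e^{−(β−gap)H})/Tr(e^{−βH})`. -/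
def tt2 (d N : ℕ) [NeZero N] (H : Op d N) (β : ℝ) (A B : Op d N) (gap : ℝ) : ℝ :=
  ((A * expH d N H gap * B * expH d N H (β - gap)).trace / (expH d N H β).trace).re

/-- The magnetization `M_{β,N}(h,ρ,λ) = ⟨σ̂ᶻ_0⟩_{β,N}`. -/
def Mag (d : ℕ) (J : (Fin d → ℤ) → ℝ) (N : ℕ) [NeZero N] (β h ρ lam : ℝ) : ℝ :=
  texp d N (Ham d J N h ρ lam) β (sigmaZ d N 0)

/-- The Hamiltonian with a general coupling matrix `K` on the torus:
`−H(K) = (1/2)·Σ_{i,j} K_{ij} σ̂ᶻ_i σ̂ᶻ_j + h·Σ_i σ̂ᶻ_i + λ·Σ_i Σ̂ˣ_i`. -/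
def HamK (d N : ℕ) [NeZero N] (K : (Fin d → ZMod N) → (Fin d → ZMod N) → ℝ)
    (h lam : ℝ) : Op d N :=
  -((2 : ℂ)⁻¹ • ∑ i, ∑ j, ((K i j : ℝ) : ℂ) • (sigmaZ d N i * sigmaZ d N j)
    + ((h : ℝ) : ℂ) • ∑ i, sigmaZ d N i
    + ((lam : ℝ) : ℂ) • ∑ i, SigX d N i)

end



open Matrix
open Kronecker
open Kronecker

noncomputable section
set_option linter.unusedSectionVars false

namespace Griff

/-- nonnegative real complex number -/
def NRC (z : ℂ) : Prop := ∃ r : ℝ, 0 ≤ r ∧ z = r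

lemma NRC.re_nonneg {z : ℂ} (h : NRC z) : 0 ≤ z.re := by
  obtain ⟨r, hr, rfl⟩ := h; simpa using hr

lemma NRC.im_zero {z : ℂ} (h : NRC z) : z.im = 0 := by
  obtain ⟨r, hr, rfl⟩ := h; simp

lemma NRC_zero : NRC 0 := ⟨0, le_refl _, by simp⟩
lemma NRC_one : NRC 1 := ⟨1, by norm_num, by simp⟩

lemma NRC.add {z w : ℂ} (hz : NRC z) (hw : NRC w) : NRC (z + w) := by
  obtain ⟨r, hr, rfl⟩ := hz; obtain ⟨s, hs, rfl⟩ := hw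
  exact ⟨r + s, by positivity, by push_cast; ring⟩

lemma NRC.mul {z w : ℂ} (hz : NRC z) (hw : NRC w) : NRC (z * w) := by
  obtain ⟨r, hr, rfl⟩ := hz; obtain ⟨s, hs, rfl⟩ := hw
  exact ⟨r * s, by positivity, by push_cast; ring⟩

lemma NRC_coe {r : ℝ} (hr : 0 ≤ r) : NRC (r : ℂ) := ⟨r, hr, rfl⟩

lemma NRC.sum {s : Finset α} {f : α → ℂ} (h : ∀ a ∈ s, NRC (f a)) :
    NRC (∑ a ∈ s, f a) := by
  classical
  induction s using Finset.induction_on with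
  | empty => simpa using NRC_zero
  | insert _ _ hx ih =>
    rw [Finset.sum_insert hx]
    exact (h _ (Finset.mem_insert_self _ _)).add
      (ih fun a ha => h a (Finset.mem_insert_of_mem ha))

lemma NRC.prod {s : Finset α} {f : α → ℂ} (h : ∀ a ∈ s, NRC (f a)) :
    NRC (∏ a ∈ s, f a) := by
  classical
  induction s using Finset.induction_on with
  | empty => simpa using NRC_one
  | insert _ _ hx ih =>
    rw [Finset.prod_insert hx]
    exact (h _ (Finset.mem_insert_self _ _)).mul
      (ih fun a ha => h a (Finset.mem_insert_of_mem ha))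

/-- entrywise nonnegative real matrix -/
def Nng {I : Type*} (M : Matrix I I ℂ) : Prop := ∀ p q, NRC (M p q)

section NngLemmas

variable {I : Type*} [Fintype I] [DecidableEq I]

lemma Nng.add {M N : Matrix I I ℂ} (hM : Nng M) (hN : Nng N) : Nng (M + N) :=
  fun p q => by simpa using (hM p q).add (hN p q)

lemma Nng.mul {M N : Matrix I I ℂ} (hM : Nng M) (hN : Nng N) : Nng (M * N) := by
  intro p q
  rw [Matrix.mul_apply]
  exact NRC.sum fun a _ => (hM p a).mul (hN a q)

lemma Nng_one : Nng (1 : Matrix I I ℂ) := by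
  intro p q
  by_cases h : p = q <;> simp [Matrix.one_apply, h, NRC_zero, NRC_one]

lemma Nng.smul {M : Matrix I I ℂ} {r : ℝ} (hr : 0 ≤ r) (hM : Nng M) :
    Nng ((r : ℂ) • M) := fun p q => by
  simpa using (NRC_coe hr).mul (hM p q)

lemma Nng.sum {s : Finset α} {f : α → Matrix I I ℂ} (h : ∀ a ∈ s, Nng (f a)) :
    Nng (∑ a ∈ s, f a) := fun p q => by
  rw [Matrix.sum_apply]
  exact NRC.sum fun a ha => h a ha p q

lemma Nng.trace {M : Matrix I I ℂ} (hM : Nng M) : NRC M.trace :=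
  NRC.sum fun a _ => hM a a

end NngLemmas


section Doubled

variable {ι : Type*} [Fintype ι] [DecidableEq ι]

/-- spin value of a Bool -/
def zet (b : Bool) : ℂ := if b then 1 else -1

lemma zet_mul_self (b : Bool) : zet b * zet b = 1 := by cases b <;> simp [zet]

lemma zet_not (b : Bool) : zet (!b) = -zet b := by cases b <;> simp [zet]

lemma zet_beq (x y : Bool) : zet (x == y) = zet x * zet y := by
  cases x <;> cases y <;> simp [zet]

/-- sign factor -/
def sgn (σ ε : ι → Bool) : ℂ := ∏ j, if ε j then zet (σ j) else 1

/-- The Ginibre change-of-basis matrix on the doubled spin space. -/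
def Umat (ι : Type*) [Fintype ι] [DecidableEq ι] :
    Matrix ((ι → Bool) × (ι → Bool)) ((ι → Bool) × (ι → Bool)) ℂ :=
  Matrix.of fun p q =>
    if q.1 = fun j => (p.1 j == p.2 j) then sgn p.1 q.2 else 0

lemma Umat_apply (p q : (ι → Bool) × (ι → Bool)) :
    Umat ι p q = if q.1 = fun j => (p.1 j == p.2 j) then sgn p.1 q.2 else 0 := rfl

/-- sum over Bool-configurations of a product factorizes -/
lemma sum_prod_bool (g : ι → Bool → ℂ) :
    ∑ σ : ι → Bool, ∏ j, g j (σ j) = ∏ j, ∑ b', g j b' := by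
  rw [Finset.prod_univ_sum]
  rw [Fintype.piFinset_univ]

/-- per-site factor appearing in `Uᵀ M U` computations -/
def efac (a b : (ι → Bool) × (ι → Bool)) (j : ι) : ℂ :=
  ∑ b', (if a.2 j then zet b' else 1) * (if b.2 j then zet b' else 1)

lemma NRC_efac (a b : (ι → Bool) × (ι → Bool)) (j : ι) : NRC (efac a b j) := by
  unfold efac
  cases ha : a.2 j <;> cases hb : b.2 j <;>
    simp [Fintype.sum_bool, zet] <;> first
      | exact NRC_zero
      | exact ⟨2, by norm_num, by norm_num⟩

/-- per-site factor with an extra spin at `u` -/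
def zfac (a b : (ι → Bool) × (ι → Bool)) (u : ι) (j : ι) : ℂ :=
  ∑ b', (if j = u then zet b' else 1) *
    ((if a.2 j then zet b' else 1) * (if b.2 j then zet b' else 1))

lemma NRC_zfac (a b : (ι → Bool) × (ι → Bool)) (u j : ι) : NRC (zfac a b u j) := by
  unfold zfac
  by_cases hj : j = u <;> cases ha : a.2 j <;> cases hb : b.2 j <;>
    simp [Fintype.sum_bool, zet, hj] <;> first
      | exact NRC_zero
      | exact ⟨2, by norm_num, by norm_num⟩

lemma sum_sgn_mul_sgn (a b : (ι → Bool) × (ι → Bool)) :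
    ∑ σ : ι → Bool, sgn σ a.2 * sgn σ b.2 = ∏ j, efac a b j := by
  simp only [efac]
  rw [← sum_prod_bool]
  refine Finset.sum_congr rfl fun σ _ => ?_
  rw [sgn, sgn, ← Finset.prod_mul_distrib]

lemma sum_sgn_zet_sgn (a b : (ι → Bool) × (ι → Bool)) (u : ι) :
    ∑ σ : ι → Bool, sgn σ a.2 * zet (σ u) * sgn σ b.2 = ∏ j, zfac a b u j := by
  simp only [zfac]
  rw [← sum_prod_bool]
  refine Finset.sum_congr rfl fun σ _ => ?_
  have hz : zet (σ u) = ∏ j, (if j = u then zet (σ j) else 1) := by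
    rw [Finset.prod_ite_eq' Finset.univ u (fun j => zet (σ j))]
    simp
  rw [sgn, sgn, hz, ← Finset.prod_mul_distrib, ← Finset.prod_mul_distrib]
  refine Finset.prod_congr rfl fun j _ => ?_
  ring

/-- the closed form of the diagonal-sandwich -/
lemma conj_diag (v : ((ι → Bool) × (ι → Bool)) → ℂ) (a b : (ι → Bool) × (ι → Bool)) :
    ((Umat ι)ᵀ * Matrix.diagonal v * Umat ι) a b =
      if b.1 = a.1 then
        ∑ σ : ι → Bool, sgn σ a.2 * v (σ, fun j => (σ j == a.1 j)) * sgn σ b.2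
      else 0 := by
  have key : ∀ (σ τ : ι → Bool),
      (a.1 = fun j => (σ j == τ j)) = (τ = fun j => (σ j == a.1 j)) := by
    intro σ τ
    apply propext
    rw [funext_iff, funext_iff]
    refine forall_congr' fun j => ?_
    cases σ j <;> cases τ j <;> cases h : a.1 j <;> simp [h]
  have key2 : ∀ (σ : ι → Bool),
      (fun j => (σ j == (σ j == a.1 j))) = a.1 := by
    intro σ; funext j; cases σ j <;> cases h : a.1 j <;> simp [h]
  rw [Matrix.mul_apply]
  simp only [Matrix.mul_diagonal, Matrix.transpose_apply]
  rw [Fintype.sum_prod_type]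
  have step : ∀ σ : ι → Bool,
      (∑ τ : ι → Bool, Umat ι (σ, τ) a * v (σ, τ) * Umat ι (σ, τ) b) =
        sgn σ a.2 * v (σ, fun j => (σ j == a.1 j)) *
          (if b.1 = a.1 then sgn σ b.2 else 0) := by
    intro σ
    have : ∀ τ : ι → Bool,
        Umat ι (σ, τ) a * v (σ, τ) * Umat ι (σ, τ) b =
          if τ = (fun j => (σ j == a.1 j)) then
            sgn σ a.2 * v (σ, τ) * Umat ι (σ, τ) b else 0 := by
      intro τ
      rw [Umat_apply]
      by_cases h : a.1 = fun j => (σ j == τ j)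
      · rw [if_pos h, if_pos]
        rw [← key σ τ, h]
      · rw [if_neg h, if_neg, zero_mul, zero_mul]
        rw [← key σ τ]; exact h
    rw [Finset.sum_congr rfl fun τ _ => this τ]
    rw [Finset.sum_ite_eq' Finset.univ (fun j => (σ j == a.1 j))
      (fun τ => sgn σ a.2 * v (σ, τ) * Umat ι (σ, τ) b)]
    simp only [Finset.mem_univ, if_pos]
    congr 1
    rw [Umat_apply]
    simp only [key2 σ]
  rw [Finset.sum_congr rfl fun σ _ => step σ]
  by_cases h : b.1 = a.1
  · rw [if_pos h]
    refine Finset.sum_congr rfl fun σ _ => ?_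
    rw [if_pos h]
  · rw [if_neg h]
    rw [Finset.sum_eq_zero]
    intro σ _
    rw [if_neg h, mul_zero]


/-- Pauli-z as generic matrix -/
def ZM (u : ι) : Matrix (ι → Bool) (ι → Bool) ℂ :=
  Matrix.diagonal (fun σ => if σ u then 1 else -1)

/-- Pauli-x as generic matrix -/
def XM (u : ι) : Matrix (ι → Bool) (ι → Bool) ℂ :=
  Matrix.of fun σ τ => if τ = Function.update σ u (!σ u) then 1 else 0

lemma ZM_diag (u : ι) : ZM u = Matrix.diagonal (fun σ => zet (σ u)) := rfl

lemma ZM_kron_one (u : ι) :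
    (ZM u ⊗ₖ (1 : Matrix (ι → Bool) (ι → Bool) ℂ)) =
      Matrix.diagonal (fun p : (ι → Bool) × (ι → Bool) => zet (p.1 u)) := by
  ext p q
  rcases p with ⟨σ, τ⟩; rcases q with ⟨σ', τ'⟩
  simp only [kroneckerMap_apply, ZM_diag, Matrix.diagonal_apply, Matrix.one_apply,
    Prod.mk.injEq]
  by_cases h1 : σ = σ' <;> by_cases h2 : τ = τ' <;> simp [h1, h2]

lemma one_kron_ZM (u : ι) :
    ((1 : Matrix (ι → Bool) (ι → Bool) ℂ) ⊗ₖ ZM u) =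
      Matrix.diagonal (fun p : (ι → Bool) × (ι → Bool) => zet (p.2 u)) := by
  ext p q
  rcases p with ⟨σ, τ⟩; rcases q with ⟨σ', τ'⟩
  simp only [kroneckerMap_apply, ZM_diag, Matrix.diagonal_apply, Matrix.one_apply,
    Prod.mk.injEq]
  by_cases h1 : σ = σ' <;> by_cases h2 : τ = τ' <;> simp [h1, h2]

lemma conj_Z1 (u : ι) (a b : (ι → Bool) × (ι → Bool)) :
    ((Umat ι)ᵀ * (ZM u ⊗ₖ (1 : Matrix (ι → Bool) (ι → Bool) ℂ)) * Umat ι) a b =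
      (if b.1 = a.1 then 1 else 0) * ∏ j, zfac a b u j := by
  rw [ZM_kron_one, conj_diag]
  by_cases h : b.1 = a.1
  · rw [if_pos h, if_pos h, one_mul, ← sum_sgn_zet_sgn]
  · rw [if_neg h, if_neg h, zero_mul]

lemma conj_Z2 (u : ι) (a b : (ι → Bool) × (ι → Bool)) :
    ((Umat ι)ᵀ * ((1 : Matrix (ι → Bool) (ι → Bool) ℂ) ⊗ₖ ZM u) * Umat ι) a b =
      zet (a.1 u) * ((if b.1 = a.1 then 1 else 0) * ∏ j, zfac a b u j) := by
  rw [one_kron_ZM, conj_diag]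
  by_cases h : b.1 = a.1
  · rw [if_pos h, if_pos h, one_mul, ← sum_sgn_zet_sgn, Finset.mul_sum]
    refine Finset.sum_congr rfl fun σ _ => ?_
    have : zet ((σ u == a.1 u)) = zet (σ u) * zet (a.1 u) := zet_beq _ _
    rw [this]; ring
  · rw [if_neg h, if_neg h, zero_mul, mul_zero]

lemma conj_one (a b : (ι → Bool) × (ι → Bool)) :
    ((Umat ι)ᵀ * Umat ι) a b =
      (if b.1 = a.1 then 1 else 0) * ∏ j, efac a b j := by
  have : (Umat ι)ᵀ * Umat ι = (Umat ι)ᵀ * Matrix.diagonal (fun _ => (1:ℂ)) * Umat ι := by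
    rw [Matrix.diagonal_one, mul_one]
  rw [this, conj_diag]
  by_cases h : b.1 = a.1
  · rw [if_pos h, if_pos h, one_mul, ← sum_sgn_mul_sgn]
    refine Finset.sum_congr rfl fun σ _ => ?_; ring
  · rw [if_neg h, if_neg h, zero_mul]


lemma cond_swap (x σ τ : ι → Bool) :
    (x = fun j => (σ j == τ j)) = (τ = fun j => (σ j == x j)) := by
  apply propext
  rw [funext_iff, funext_iff]
  refine forall_congr' fun j => ?_
  cases σ j <;> cases τ j <;> cases h : x j <;> simp [h]

lemma eqv_pair (σ x : ι → Bool) :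
    (fun j => (σ j == (σ j == x j))) = x := by
  funext j; cases σ j <;> cases h : x j <;> simp [h]

lemma sgn_update (σ ε : ι → Bool) (u : ι) :
    sgn (Function.update σ u (!σ u)) ε = (if ε u then (-1:ℂ) else 1) * sgn σ ε := by
  unfold sgn
  rw [← Finset.mul_prod_erase Finset.univ _ (Finset.mem_univ u),
    ← Finset.mul_prod_erase Finset.univ (fun j => if ε j then zet (σ j) else 1)
      (Finset.mem_univ u), ← mul_assoc]
  congr 1
  · rw [Function.update_self]
    cases ε u <;> simp [zet_not]
  · refine Finset.prod_congr rfl fun j hj => ?_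
    rw [Function.update_of_ne (Finset.ne_of_mem_erase hj)]

lemma flip_pattern1 (σ x : ι → Bool) (u : ι) :
    (fun j => (Function.update σ u (!σ u) j == (σ j == x j))) =
      Function.update x u (!x u) := by
  funext j
  by_cases h : j = u
  · subst h
    rw [Function.update_self, Function.update_self]
    cases σ j <;> cases x j <;> rfl
  · rw [Function.update_of_ne h, Function.update_of_ne h]
    cases σ j <;> cases x j <;> rfl

lemma flip_pattern2 (σ x : ι → Bool) (u : ι) :
    (fun j => (σ j == Function.update (fun i => (σ i == x i)) u
        (!(σ u == x u)) j)) = Function.update x u (!x u) := by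
  funext j
  by_cases h : j = u
  · subst h
    rw [Function.update_self, Function.update_self]
    cases σ j <;> cases x j <;> rfl
  · rw [Function.update_of_ne h, Function.update_of_ne h]
    cases σ j <;> cases x j <;> rfl

lemma XM_kron_one_mul_U (u : ι) (p : (ι → Bool) × (ι → Bool))
    (b : (ι → Bool) × (ι → Bool)) :
    ((XM u ⊗ₖ (1 : Matrix (ι → Bool) (ι → Bool) ℂ)) * Umat ι) p b =
      Umat ι (Function.update p.1 u (!p.1 u), p.2) b := by
  rw [Matrix.mul_apply, Fintype.sum_prod_type]
  have step : ∀ q1 q2 : ι → Bool,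
      (XM u ⊗ₖ (1 : Matrix (ι → Bool) (ι → Bool) ℂ)) p (q1, q2) * Umat ι (q1, q2) b =
        if q2 = p.2 then
          (if q1 = Function.update p.1 u (!p.1 u) then Umat ι (q1, q2) b else 0)
        else 0 := by
    intro q1 q2
    simp only [kroneckerMap_apply, XM, Matrix.of_apply, Matrix.one_apply]
    by_cases h1 : q1 = Function.update p.1 u (!p.1 u) <;>
      by_cases h2 : q2 = p.2 <;>
      simp [h1, h2, eq_comm]
  rw [Finset.sum_congr rfl fun q1 _ => Finset.sum_congr rfl fun q2 _ => step q1 q2]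
  rw [Finset.sum_congr rfl fun q1 (_ : q1 ∈ Finset.univ) =>
    Finset.sum_ite_eq' Finset.univ p.2
      (fun q2 => if q1 = Function.update p.1 u (!p.1 u) then Umat ι (q1, q2) b else 0)]
  simp only [Finset.mem_univ, if_true]
  rw [Finset.sum_ite_eq' Finset.univ (Function.update p.1 u (!p.1 u))
    (fun q1 => Umat ι (q1, p.2) b)]
  simp

lemma one_kron_XM_mul_U (u : ι) (p : (ι → Bool) × (ι → Bool))
    (b : (ι → Bool) × (ι → Bool)) :
    (((1 : Matrix (ι → Bool) (ι → Bool) ℂ) ⊗ₖ XM u) * Umat ι) p b =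
      Umat ι (p.1, Function.update p.2 u (!p.2 u)) b := by
  rw [Matrix.mul_apply, Fintype.sum_prod_type]
  have step : ∀ q1 q2 : ι → Bool,
      ((1 : Matrix (ι → Bool) (ι → Bool) ℂ) ⊗ₖ XM u) p (q1, q2) * Umat ι (q1, q2) b =
        if q2 = Function.update p.2 u (!p.2 u) then
          (if q1 = p.1 then Umat ι (q1, q2) b else 0)
        else 0 := by
    intro q1 q2
    simp only [kroneckerMap_apply, XM, Matrix.of_apply, Matrix.one_apply]
    by_cases h1 : q1 = p.1 <;>
      by_cases h2 : q2 = Function.update p.2 u (!p.2 u) <;>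
      simp [h1, h2, eq_comm]
  rw [Finset.sum_congr rfl fun q1 _ => Finset.sum_congr rfl fun q2 _ => step q1 q2]
  rw [Finset.sum_congr rfl fun q1 (_ : q1 ∈ Finset.univ) =>
    Finset.sum_ite_eq' Finset.univ (Function.update p.2 u (!p.2 u))
      (fun q2 => if q1 = p.1 then Umat ι (q1, q2) b else 0)]
  simp only [Finset.mem_univ, if_true]
  rw [Finset.sum_ite_eq' Finset.univ p.1
    (fun q1 => Umat ι (q1, Function.update p.2 u (!p.2 u)) b)]
  simp


lemma conj_X1 (u : ι) (a b : (ι → Bool) × (ι → Bool)) :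
    ((Umat ι)ᵀ * (XM u ⊗ₖ (1 : Matrix (ι → Bool) (ι → Bool) ℂ)) * Umat ι) a b =
      (if b.1 = Function.update a.1 u (!a.1 u) then 1 else 0) *
        ((if b.2 u then (-1:ℂ) else 1) * ∏ j, efac a b j) := by
  rw [mul_assoc, Matrix.mul_apply]
  have e1 : ∀ p : (ι → Bool) × (ι → Bool),
      (Umat ι)ᵀ a p * ((XM u ⊗ₖ (1 : Matrix (ι → Bool) (ι → Bool) ℂ)) * Umat ι) p b =
        Umat ι p a * Umat ι (Function.update p.1 u (!p.1 u), p.2) b := by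
    intro p
    rw [Matrix.transpose_apply, XM_kron_one_mul_U]
  rw [Finset.sum_congr rfl fun p _ => e1 p]
  rw [Fintype.sum_prod_type]
  have step : ∀ σ : ι → Bool,
      (∑ τ : ι → Bool, Umat ι (σ, τ) a *
          Umat ι (Function.update σ u (!σ u), τ) b) =
        sgn σ a.2 * (if b.1 = Function.update a.1 u (!a.1 u) then
          (if b.2 u then (-1:ℂ) else 1) * sgn σ b.2 else 0) := by
    intro σ
    have e2 : ∀ τ : ι → Bool,
        Umat ι (σ, τ) a * Umat ι (Function.update σ u (!σ u), τ) b =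
          if τ = (fun j => (σ j == a.1 j)) then
            sgn σ a.2 * Umat ι (Function.update σ u (!σ u), τ) b else 0 := by
      intro τ
      rw [Umat_apply]
      by_cases h : a.1 = fun j => (σ j == τ j)
      · rw [if_pos h, if_pos]
        rw [← cond_swap a.1 σ τ]; exact h
      · rw [if_neg h, zero_mul, if_neg]
        rw [← cond_swap a.1 σ τ]; exact h
    rw [Finset.sum_congr rfl fun τ _ => e2 τ]
    rw [Finset.sum_ite_eq' Finset.univ (fun j => (σ j == a.1 j))
      (fun τ => sgn σ a.2 * Umat ι (Function.update σ u (!σ u), τ) b)]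
    simp only [Finset.mem_univ, if_true]
    congr 1
    rw [Umat_apply]
    simp only [flip_pattern1 σ a.1 u]
    by_cases h : b.1 = Function.update a.1 u (!a.1 u)
    · rw [if_pos h, if_pos h, sgn_update]
    · rw [if_neg h, if_neg h]
  rw [Finset.sum_congr rfl fun σ _ => step σ]
  by_cases h : b.1 = Function.update a.1 u (!a.1 u)
  · simp only [if_pos h, one_mul]
    rw [← sum_sgn_mul_sgn a b, Finset.mul_sum]
    refine Finset.sum_congr rfl fun σ _ => ?_; ring
  · simp only [if_neg h, mul_zero, zero_mul, Finset.sum_const_zero]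

lemma conj_X2 (u : ι) (a b : (ι → Bool) × (ι → Bool)) :
    ((Umat ι)ᵀ * ((1 : Matrix (ι → Bool) (ι → Bool) ℂ) ⊗ₖ XM u) * Umat ι) a b =
      (if b.1 = Function.update a.1 u (!a.1 u) then 1 else 0) * ∏ j, efac a b j := by
  rw [mul_assoc, Matrix.mul_apply]
  have e1 : ∀ p : (ι → Bool) × (ι → Bool),
      (Umat ι)ᵀ a p * (((1 : Matrix (ι → Bool) (ι → Bool) ℂ) ⊗ₖ XM u) * Umat ι) p b =
        Umat ι p a * Umat ι (p.1, Function.update p.2 u (!p.2 u)) b := by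
    intro p
    rw [Matrix.transpose_apply, one_kron_XM_mul_U]
  rw [Finset.sum_congr rfl fun p _ => e1 p]
  rw [Fintype.sum_prod_type]
  have step : ∀ σ : ι → Bool,
      (∑ τ : ι → Bool, Umat ι (σ, τ) a *
          Umat ι (σ, Function.update τ u (!τ u)) b) =
        sgn σ a.2 * (if b.1 = Function.update a.1 u (!a.1 u) then sgn σ b.2 else 0) := by
    intro σ
    have e2 : ∀ τ : ι → Bool,
        Umat ι (σ, τ) a * Umat ι (σ, Function.update τ u (!τ u)) b =
          if τ = (fun j => (σ j == a.1 j)) then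
            sgn σ a.2 * Umat ι (σ, Function.update τ u (!τ u)) b else 0 := by
      intro τ
      rw [Umat_apply]
      by_cases h : a.1 = fun j => (σ j == τ j)
      · rw [if_pos h, if_pos]
        rw [← cond_swap a.1 σ τ]; exact h
      · rw [if_neg h, zero_mul, if_neg]
        rw [← cond_swap a.1 σ τ]; exact h
    rw [Finset.sum_congr rfl fun τ _ => e2 τ]
    rw [Finset.sum_ite_eq' Finset.univ (fun j => (σ j == a.1 j))
      (fun τ => sgn σ a.2 * Umat ι (σ, Function.update τ u (!τ u)) b)]
    simp only [Finset.mem_univ, if_true]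
    congr 1
    rw [Umat_apply]
    simp only []
    have : (fun j => (σ j == Function.update (fun i => (σ i == a.1 i)) u
        (!(σ u == a.1 u)) j)) = Function.update a.1 u (!a.1 u) :=
      flip_pattern2 σ a.1 u
    have hupd : Function.update (fun i => (σ i == a.1 i)) u (!(σ u == a.1 u)) =
        Function.update (fun i => (σ i == a.1 i)) u (!((fun i => (σ i == a.1 i)) u)) := rfl
    rw [← hupd]
    by_cases h : b.1 = Function.update a.1 u (!a.1 u)
    · rw [if_pos, if_pos h]
      rw [this]; exact h
    · rw [if_neg, if_neg h]
      rw [this]; exact h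
  rw [Finset.sum_congr rfl fun σ _ => step σ]
  by_cases h : b.1 = Function.update a.1 u (!a.1 u)
  · simp only [if_pos h, one_mul]
    rw [← sum_sgn_mul_sgn a b]
  · simp only [if_neg h, mul_zero, zero_mul, Finset.sum_const_zero]


lemma prod_efac_closed (a b : (ι → Bool) × (ι → Bool)) :
    (∏ j, efac a b j) = if a.2 = b.2 then (2:ℂ) ^ (Fintype.card ι) else 0 := by
  by_cases h : a.2 = b.2
  · rw [if_pos h]
    have : ∀ j, efac a b j = 2 := by
      intro j
      unfold efac
      rw [← h]
      cases ha : a.2 j <;> norm_num [Fintype.sum_bool, zet]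
    rw [Finset.prod_congr rfl fun j _ => this j]
    simp [Finset.card_univ]
  · rw [if_neg h]
    have : ∃ j, a.2 j ≠ b.2 j := by
      by_contra hc
      push_neg at hc
      exact h (funext hc)
    obtain ⟨j, hj⟩ := this
    refine Finset.prod_eq_zero (Finset.mem_univ j) ?_
    unfold efac
    cases ha : a.2 j <;> cases hb : b.2 j <;>
      first
        | (exfalso; rw [ha, hb] at hj; exact hj rfl)
        | simp [Fintype.sum_bool, zet]

lemma UTU : (Umat ι)ᵀ * Umat ι = ((2:ℂ) ^ (Fintype.card ι)) • 1 := by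
  ext a b
  rw [conj_one, prod_efac_closed]
  simp only [Matrix.smul_apply, Matrix.one_apply, smul_eq_mul]
  by_cases h1 : b.1 = a.1 <;> by_cases h2 : a.2 = b.2 <;>
    by_cases h : a = b <;>
    simp_all [Prod.ext_iff, eq_comm]

lemma two_pow_ne_zero : ((2:ℂ) ^ (Fintype.card ι)) ≠ 0 :=
  pow_ne_zero _ two_ne_zero

lemma UUT : Umat ι * (Umat ι)ᵀ = ((2:ℂ) ^ (Fintype.card ι)) • 1 := by
  have h := UTU (ι := ι)
  have hc : ((2:ℂ) ^ (Fintype.card ι))⁻¹ • (Umat ι)ᵀ * Umat ι = 1 := by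
    rw [Matrix.smul_mul, h, smul_smul, inv_mul_cancel₀ two_pow_ne_zero, one_smul]
  have h1 := mul_eq_one_comm.mp hc
  rw [Matrix.mul_smul] at h1
  have h2 := congrArg (fun X => ((2:ℂ) ^ (Fintype.card ι)) • X) h1
  simp only [smul_smul, mul_inv_cancel₀ two_pow_ne_zero, one_smul] at h2
  exact h2

/-- The Ginibre cone: matrices whose conjugation by `Umat` has nonnegative entries. -/
def GC (M : Matrix ((ι → Bool) × (ι → Bool)) ((ι → Bool) × (ι → Bool)) ℂ) : Prop :=
  Nng ((Umat ι)ᵀ * M * Umat ι)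

lemma GC.add {M N : Matrix ((ι → Bool) × (ι → Bool)) ((ι → Bool) × (ι → Bool)) ℂ}
    (hM : GC M) (hN : GC N) : GC (M + N) := by
  unfold GC at *
  rw [mul_add, add_mul]
  exact hM.add hN

lemma GC.smul {M : Matrix ((ι → Bool) × (ι → Bool)) ((ι → Bool) × (ι → Bool)) ℂ}
    {r : ℝ} (hr : 0 ≤ r) (hM : GC M) : GC ((r : ℂ) • M) := by
  unfold GC at *
  rw [Matrix.mul_smul, Matrix.smul_mul]
  exact Nng.smul hr hM

lemma GC.sum {s : Finset α} {f : α → Matrix ((ι → Bool) × (ι → Bool)) ((ι → Bool) × (ι → Bool)) ℂ}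
    (h : ∀ a ∈ s, GC (f a)) : GC (∑ a ∈ s, f a) := by
  unfold GC at *
  rw [Finset.mul_sum, Finset.sum_mul]
  exact Nng.sum fun a ha => h a ha

lemma GC.mul {M N : Matrix ((ι → Bool) × (ι → Bool)) ((ι → Bool) × (ι → Bool)) ℂ}
    (hM : GC M) (hN : GC N) : GC (M * N) := by
  unfold GC at *
  have key : (Umat ι)ᵀ * (M * N) * Umat ι =
      (((2:ℂ) ^ (Fintype.card ι))⁻¹ • (((Umat ι)ᵀ * M * Umat ι) * ((Umat ι)ᵀ * N * Umat ι))) := by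
    have : ((Umat ι)ᵀ * M * Umat ι) * ((Umat ι)ᵀ * N * Umat ι) =
        (Umat ι)ᵀ * M * (Umat ι * (Umat ι)ᵀ) * N * Umat ι := by
      simp only [Matrix.mul_assoc]
    rw [this, UUT]
    rw [Matrix.mul_smul, Matrix.smul_mul, Matrix.smul_mul, mul_one, smul_smul,
      inv_mul_cancel₀ two_pow_ne_zero, one_smul]
    simp only [Matrix.mul_assoc]
  rw [key]
  have h2 : ((2:ℂ) ^ (Fintype.card ι))⁻¹ = (((2:ℝ) ^ (Fintype.card ι))⁻¹ : ℝ) := by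
    push_cast; ring
  rw [h2]
  exact Nng.smul (by positivity) (hM.mul hN)

lemma GC.trace {M : Matrix ((ι → Bool) × (ι → Bool)) ((ι → Bool) × (ι → Bool)) ℂ}
    (hM : GC M) : NRC M.trace := by
  have h1 : ((Umat ι)ᵀ * M * Umat ι).trace = ((2:ℂ) ^ (Fintype.card ι)) * M.trace := by
    rw [Matrix.trace_mul_cycle, UUT, Matrix.smul_mul, one_mul,
      Matrix.trace_smul, smul_eq_mul]
  have key : M.trace = ((((2:ℝ) ^ (Fintype.card ι))⁻¹ : ℝ) : ℂ) * ((Umat ι)ᵀ * M * Umat ι).trace := by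
    rw [h1, ← mul_assoc]
    have : ((((2:ℝ) ^ (Fintype.card ι))⁻¹ : ℝ) : ℂ) * ((2:ℂ) ^ (Fintype.card ι)) = 1 := by
      push_cast
      exact inv_mul_cancel₀ two_pow_ne_zero
    rw [this, one_mul]
  rw [key]
  exact (NRC_coe (by positivity)).mul (Nng.trace hM)


lemma NRC_ind (c : Prop) [Decidable c] : NRC (if c then (1:ℂ) else 0) := by
  split_ifs
  exacts [NRC_one, NRC_zero]

lemma GC_one : GC (1 : Matrix ((ι → Bool) × (ι → Bool)) ((ι → Bool) × (ι → Bool)) ℂ) := by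
  unfold GC
  rw [mul_one]
  intro a b
  rw [conj_one]
  exact (NRC_ind _).mul (NRC.prod fun j _ => NRC_efac a b j)

lemma GC_S (u : ι) :
    GC (ZM u ⊗ₖ (1 : Matrix (ι → Bool) (ι → Bool) ℂ) +
      (1 : Matrix (ι → Bool) (ι → Bool) ℂ) ⊗ₖ ZM u) := by
  unfold GC
  rw [mul_add, add_mul]
  intro a b
  rw [Matrix.add_apply, conj_Z1, conj_Z2]
  have : (if b.1 = a.1 then (1:ℂ) else 0) * (∏ j, zfac a b u j) +
      zet (a.1 u) * ((if b.1 = a.1 then (1:ℂ) else 0) * ∏ j, zfac a b u j) =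
      (1 + zet (a.1 u)) * ((if b.1 = a.1 then (1:ℂ) else 0) * ∏ j, zfac a b u j) := by
    ring
  rw [this]
  refine NRC.mul ?_ ((NRC_ind _).mul (NRC.prod fun j _ => NRC_zfac a b u j))
  cases h : a.1 u <;> norm_num [zet]
  exacts [NRC_zero, ⟨2, by norm_num, by norm_num⟩]

lemma GC_D (u : ι) :
    GC (ZM u ⊗ₖ (1 : Matrix (ι → Bool) (ι → Bool) ℂ) -
      (1 : Matrix (ι → Bool) (ι → Bool) ℂ) ⊗ₖ ZM u) := by
  unfold GC
  rw [mul_sub, sub_mul]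
  intro a b
  rw [Matrix.sub_apply, conj_Z1, conj_Z2]
  have : (if b.1 = a.1 then (1:ℂ) else 0) * (∏ j, zfac a b u j) -
      zet (a.1 u) * ((if b.1 = a.1 then (1:ℂ) else 0) * ∏ j, zfac a b u j) =
      (1 - zet (a.1 u)) * ((if b.1 = a.1 then (1:ℂ) else 0) * ∏ j, zfac a b u j) := by
    ring
  rw [this]
  refine NRC.mul ?_ ((NRC_ind _).mul (NRC.prod fun j _ => NRC_zfac a b u j))
  cases h : a.1 u <;> norm_num [zet]
  exacts [⟨2, by norm_num, by norm_num⟩, NRC_zero]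

lemma GC_F (u : ι) :
    GC (XM u ⊗ₖ (1 : Matrix (ι → Bool) (ι → Bool) ℂ) +
      (1 : Matrix (ι → Bool) (ι → Bool) ℂ) ⊗ₖ XM u) := by
  unfold GC
  rw [mul_add, add_mul]
  intro a b
  rw [Matrix.add_apply, conj_X1, conj_X2]
  have : (if b.1 = Function.update a.1 u (!a.1 u) then (1:ℂ) else 0) *
        ((if b.2 u then (-1:ℂ) else 1) * ∏ j, efac a b j) +
      (if b.1 = Function.update a.1 u (!a.1 u) then (1:ℂ) else 0) * ∏ j, efac a b j =
      ((if b.2 u then (-1:ℂ) else 1) + 1) *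
        ((if b.1 = Function.update a.1 u (!a.1 u) then (1:ℂ) else 0) * ∏ j, efac a b j) := by
    ring
  rw [this]
  refine NRC.mul ?_ ((NRC_ind _).mul (NRC.prod fun j _ => NRC_efac a b j))
  cases h : b.2 u <;> norm_num
  exacts [⟨2, by norm_num, by norm_num⟩, NRC_zero]

end Doubled

section Analytic

variable {I J : Type*} [Fintype I] [DecidableEq I] [Fintype J] [DecidableEq J]

/-- `A ↦ A ⊗ₖ 1` as a ring homomorphism. -/
def kr1 (I J : Type*) [Fintype I] [DecidableEq I] [Fintype J] [DecidableEq J] :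
    Matrix I I ℂ →+* Matrix (I × J) (I × J) ℂ where
  toFun A := A ⊗ₖ (1 : Matrix J J ℂ)
  map_one' := Matrix.one_kronecker_one
  map_mul' A B := by simpa using Matrix.mul_kronecker_mul A B (1 : Matrix J J ℂ) 1
  map_zero' := Matrix.zero_kronecker _
  map_add' A B := Matrix.add_kronecker A B _

/-- `B ↦ 1 ⊗ₖ B` as a ring homomorphism. -/
def kr2 (I J : Type*) [Fintype I] [DecidableEq I] [Fintype J] [DecidableEq J] :
    Matrix J J ℂ →+* Matrix (I × J) (I × J) ℂ where
  toFun B := (1 : Matrix I I ℂ) ⊗ₖ B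
  map_one' := Matrix.one_kronecker_one
  map_mul' A B := by simpa using Matrix.mul_kronecker_mul (1 : Matrix I I ℂ) 1 A B
  map_zero' := Matrix.kronecker_zero _
  map_add' A B := Matrix.kronecker_add _ A B

lemma continuous_kron1 : Continuous (fun A : Matrix I I ℂ => A ⊗ₖ (1 : Matrix J J ℂ)) := by
  apply continuous_matrix
  intro p q
  exact (continuous_id.matrix_elem p.1 q.1).mul continuous_const

lemma continuous_kron2 : Continuous (fun B : Matrix J J ℂ => (1 : Matrix I I ℂ) ⊗ₖ B) := by
  apply continuous_matrix
  intro p q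
  exact continuous_const.mul (continuous_id.matrix_elem p.2 q.2)

/-- exponential of a Kronecker sum -/
lemma kron_exp (A : Matrix I I ℂ) (B : Matrix J J ℂ) :
    NormedSpace.exp (A ⊗ₖ (1 : Matrix J J ℂ) + (1 : Matrix I I ℂ) ⊗ₖ B) =
      (NormedSpace.exp A) ⊗ₖ (NormedSpace.exp B) := by
  have hcomm : Commute (A ⊗ₖ (1 : Matrix J J ℂ)) ((1 : Matrix I I ℂ) ⊗ₖ B) := by
    unfold Commute SemiconjBy
    rw [← Matrix.mul_kronecker_mul, ← Matrix.mul_kronecker_mul, one_mul, mul_one,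
      one_mul, mul_one]
  rw [Matrix.exp_add_of_commute _ _ hcomm]
  have h1 : NormedSpace.exp (A ⊗ₖ (1 : Matrix J J ℂ)) =
      (NormedSpace.exp A) ⊗ₖ (1 : Matrix J J ℂ) := by
    letI : SeminormedRing (Matrix I I ℂ) := Matrix.linftyOpSemiNormedRing
    letI : NormedRing (Matrix I I ℂ) := Matrix.linftyOpNormedRing
    letI : NormedAlgebra ℂ (Matrix I I ℂ) := Matrix.linftyOpNormedAlgebra
    letI : SeminormedRing (Matrix (I × J) (I × J) ℂ) := Matrix.linftyOpSemiNormedRing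
    letI : NormedRing (Matrix (I × J) (I × J) ℂ) := Matrix.linftyOpNormedRing
    letI : NormedAlgebra ℂ (Matrix (I × J) (I × J) ℂ) := Matrix.linftyOpNormedAlgebra
    letI : NormedAlgebra ℚ (Matrix I I ℂ) := Matrix.linftyOpNormedAlgebra
    exact (NormedSpace.map_exp (kr1 I J) continuous_kron1 A).symm
  have h2 : NormedSpace.exp ((1 : Matrix I I ℂ) ⊗ₖ B) =
      (1 : Matrix I I ℂ) ⊗ₖ (NormedSpace.exp B) := by
    letI : SeminormedRing (Matrix J J ℂ) := Matrix.linftyOpSemiNormedRing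
    letI : NormedRing (Matrix J J ℂ) := Matrix.linftyOpNormedRing
    letI : NormedAlgebra ℂ (Matrix J J ℂ) := Matrix.linftyOpNormedAlgebra
    letI : SeminormedRing (Matrix (I × J) (I × J) ℂ) := Matrix.linftyOpSemiNormedRing
    letI : NormedRing (Matrix (I × J) (I × J) ℂ) := Matrix.linftyOpNormedRing
    letI : NormedAlgebra ℂ (Matrix (I × J) (I × J) ℂ) := Matrix.linftyOpNormedAlgebra
    letI : NormedAlgebra ℚ (Matrix J J ℂ) := Matrix.linftyOpNormedAlgebra
    exact (NormedSpace.map_exp (kr2 I J) continuous_kron2 B).symm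
  rw [h1, h2, ← Matrix.mul_kronecker_mul, one_mul, mul_one]

/-- trace against the exponential as a convergent series -/
lemma hasSum_trace_mul_exp (D M : Matrix I I ℂ) :
    HasSum (fun n : ℕ => ((n.factorial : ℂ))⁻¹ • (D * M ^ n).trace)
      ((D * NormedSpace.exp M).trace) := by
  letI : SeminormedRing (Matrix I I ℂ) := Matrix.linftyOpSemiNormedRing
  letI : NormedRing (Matrix I I ℂ) := Matrix.linftyOpNormedRing
  letI : NormedAlgebra ℂ (Matrix I I ℂ) := Matrix.linftyOpNormedAlgebra
  have h := NormedSpace.exp_series_hasSum_exp' (𝕂 := ℂ) M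
  have hφc : Continuous (fun X : Matrix I I ℂ => (D * X).trace) :=
    (continuous_const.matrix_mul continuous_id).matrix_trace
  let φ : Matrix I I ℂ →+ ℂ :=
    { toFun := fun X => (D * X).trace
      map_zero' := by simp
      map_add' := fun X Y => by
        show (D * (X + Y)).trace = (D * X).trace + (D * Y).trace
        rw [mul_add, Matrix.trace_add] }
  have h2 := h.map φ hφc
  have : (φ ∘ fun n : ℕ => ((n.factorial : ℂ))⁻¹ • M ^ n) =
      fun n : ℕ => ((n.factorial : ℂ))⁻¹ • (D * M ^ n).trace := by
    funext n
    show (D * (((n.factorial : ℂ))⁻¹ • M ^ n)).trace = _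
    rw [mul_smul_comm, Matrix.trace_smul]
  rw [this] at h2
  exact h2

/-- exponential after adding a scalar -/
lemma exp_eq_smul_exp_add_smul_one (A : Matrix I I ℂ) (c : ℝ) :
    NormedSpace.exp A =
      Complex.exp (-(c:ℂ)) • NormedSpace.exp (A + (c:ℂ) • 1) := by
  have hA : A = (A + (c:ℂ) • 1) + (-(c:ℂ)) • 1 := by
    rw [neg_smul, add_neg_cancel_right]
  conv_lhs => rw [hA]
  rw [Matrix.exp_add_of_commute _ _ ((Commute.one_right _).smul_right _)]
  have hexp1 : NormedSpace.exp ((-(c:ℂ)) • (1 : Matrix I I ℂ)) =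
      Complex.exp (-(c:ℂ)) • 1 := by
    rw [Matrix.smul_one_eq_diagonal, Matrix.exp_diagonal, Pi.exp_def]
    have hfun : (fun i : I => NormedSpace.exp ((fun _ : I => (-(c:ℂ))) i)) =
        fun _ : I => Complex.exp (-(c:ℂ)) := by
      funext i
      rw [← Complex.exp_eq_exp_ℂ]
    rw [hfun, ← Matrix.smul_one_eq_diagonal]
  rw [hexp1, mul_smul_comm, mul_one]

end Analytic

section Series

variable {I : Type*} [Fintype I] [DecidableEq I]

lemma Nng.pow {M : Matrix I I ℂ} (hM : Nng M) (n : ℕ) : Nng (M ^ n) := by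
  induction n with
  | zero => simpa [pow_zero] using (Nng_one : Nng (1 : Matrix I I ℂ))
  | succ n ih => rw [pow_succ]; exact ih.mul hM

lemma NRC_inv_factorial (n : ℕ) : NRC ((n.factorial : ℂ))⁻¹ :=
  ⟨(n.factorial : ℝ)⁻¹, by positivity, by push_cast; ring⟩

/-- the trace of the exponential of an entrywise-nonnegative matrix is a
positive real (at least the cardinality). -/
lemma trace_exp_nng_pos [Nonempty I] {M : Matrix I I ℂ} (hM : Nng M) :
    ∃ r : ℝ, 0 < r ∧ (NormedSpace.exp M).trace = (r : ℂ) := by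
  have h := hasSum_trace_mul_exp (1 : Matrix I I ℂ) M
  simp only [one_mul] at h
  have hNRC : ∀ n : ℕ, NRC (((n.factorial : ℂ))⁻¹ • (M ^ n).trace) := by
    intro n
    rw [smul_eq_mul]
    exact (NRC_inv_factorial n).mul (Nng.trace (hM.pow n))
  have hre : HasSum (fun n : ℕ => (((n.factorial : ℂ))⁻¹ • (M ^ n).trace).re)
      ((NormedSpace.exp M).trace).re := by
    have := h.map Complex.reAddGroupHom Complex.continuous_re
    exact this
  have him : ((NormedSpace.exp M).trace).im = 0 := by
    have h2 := h.map Complex.imAddGroupHom Complex.continuous_im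
    have h3 : (fun n : ℕ => (((n.factorial : ℂ))⁻¹ • (M ^ n).trace).im) = fun _ => (0:ℝ) := by
      funext n
      exact (hNRC n).im_zero
    rw [show (Complex.imAddGroupHom ∘ fun n : ℕ => ((n.factorial : ℂ))⁻¹ • (M ^ n).trace) =
      (fun n : ℕ => (((n.factorial : ℂ))⁻¹ • (M ^ n).trace).im) from rfl, h3] at h2
    exact h2.unique hasSum_zero
  have hbound : (1 : ℝ) ≤ ((NormedSpace.exp M).trace).re := by
    have h0 : (((Nat.factorial 0 : ℂ))⁻¹ • (M ^ 0).trace).re = (Fintype.card I : ℝ) := by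
      simp [Matrix.trace_one]
    have hle := le_hasSum hre 0 (fun n _ => (hNRC n).re_nonneg)
    rw [h0] at hle
    have hcard : (1:ℝ) ≤ (Fintype.card I : ℝ) := by
      have := Fintype.card_pos (α := I)
      exact_mod_cast this
    linarith
  refine ⟨((NormedSpace.exp M).trace).re, by linarith, ?_⟩
  apply Complex.ext
  · simp
  · simp [him]

end Series

section HamAlg

variable {ι : Type*} [Fintype ι] [DecidableEq ι]

/-- generic `Σ̂ˣ` -/
def SXM (u : ι) : Matrix (ι → Bool) (ι → Bool) ℂ := (2:ℂ)⁻¹ • (1 + XM u)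

/-- the (negated) Hamiltonian bracket -/
def TG (K : ι → ι → ℝ) (h lam : ℝ) : Matrix (ι → Bool) (ι → Bool) ℂ :=
  (2:ℂ)⁻¹ • ∑ i, ∑ j, ((K i j : ℝ) : ℂ) • (ZM i * ZM j)
    + ((h : ℝ) : ℂ) • ∑ i, ZM i + ((lam : ℝ) : ℂ) • ∑ i, SXM i

/-- the generic Hamiltonian -/
def HamG (K : ι → ι → ℝ) (h lam : ℝ) : Matrix (ι → Bool) (ι → Bool) ℂ :=
  -(TG K h lam)

/-- the shifted, entrywise nonnegative bracket -/
def TGp (K : ι → ι → ℝ) (h lam : ℝ) : Matrix (ι → Bool) (ι → Bool) ℂ :=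
  (2:ℂ)⁻¹ • ∑ i, ∑ j, ((K i j : ℝ) : ℂ) • (ZM i * ZM j + 1)
    + ((h : ℝ) : ℂ) • ∑ i, (ZM i + 1) + ((lam : ℝ) : ℂ) • ∑ i, SXM i

lemma Nng_ZZ1 (i j : ι) : Nng (ZM i * ZM j + 1) := by
  intro p q
  rw [ZM_diag, ZM_diag, Matrix.diagonal_mul_diagonal]
  rw [Matrix.add_apply, Matrix.diagonal_apply, Matrix.one_apply]
  by_cases h : p = q
  · rw [if_pos h, if_pos h]
    cases hp : p i <;> cases hq : p j
    · exact ⟨2, by norm_num, by norm_num [zet]⟩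
    · exact ⟨0, le_refl _, by norm_num [zet]⟩
    · exact ⟨0, le_refl _, by norm_num [zet]⟩
    · exact ⟨2, by norm_num, by norm_num [zet]⟩
  · rw [if_neg h, if_neg h]
    simpa using NRC_zero

lemma Nng_Z1 (i : ι) : Nng (ZM i + 1) := by
  intro p q
  rw [ZM_diag, Matrix.add_apply, Matrix.diagonal_apply, Matrix.one_apply]
  by_cases h : p = q
  · rw [if_pos h, if_pos h]
    cases hp : p i
    · exact ⟨0, le_refl _, by norm_num [zet]⟩
    · exact ⟨2, by norm_num, by norm_num [zet]⟩
  · rw [if_neg h, if_neg h]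
    simpa using NRC_zero

lemma Nng_SXM (i : ι) : Nng (SXM i) := by
  intro p q
  unfold SXM
  rw [Matrix.smul_apply, Matrix.add_apply, Matrix.one_apply]
  have h2 : (2:ℂ)⁻¹ = (((2:ℝ)⁻¹ : ℝ) : ℂ) := by push_cast; ring
  rw [smul_eq_mul, h2]
  refine (NRC_coe (by norm_num)).mul ?_
  unfold XM
  rw [Matrix.of_apply]
  by_cases h : p = q <;> by_cases h' : q = Function.update p i (!p i)
  · rw [if_pos h, if_pos h']
    exact ⟨2, by norm_num, by norm_num⟩
  · rw [if_pos h, if_neg h']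
    exact ⟨1, by norm_num, by norm_num⟩
  · rw [if_neg h, if_pos h']
    exact ⟨1, by norm_num, by norm_num⟩
  · rw [if_neg h, if_neg h']
    exact ⟨0, le_refl _, by norm_num⟩

lemma Nng_TGp (K : ι → ι → ℝ) (h lam : ℝ)
    (hK : ∀ i j, 0 ≤ K i j) (hh : 0 ≤ h) (hlam : 0 ≤ lam) :
    Nng (TGp K h lam) := by
  unfold TGp
  have h2 : (2:ℂ)⁻¹ = (((2:ℝ)⁻¹ : ℝ) : ℂ) := by push_cast; ring
  rw [h2]
  refine Nng.add (Nng.add ?_ ?_) ?_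
  · exact Nng.smul (by norm_num) (Nng.sum fun i _ => Nng.sum fun j _ =>
      Nng.smul (hK i j) (Nng_ZZ1 i j))
  · exact Nng.smul hh (Nng.sum fun i _ => Nng_Z1 i)
  · exact Nng.smul hlam (Nng.sum fun i _ => Nng_SXM i)

lemma TGp_eq (K : ι → ι → ℝ) (h lam : ℝ) :
    TGp K h lam = TG K h lam +
      ((2⁻¹ * (∑ i, ∑ j, K i j) + h * (Fintype.card ι) : ℝ) : ℂ) • 1 := by
  unfold TGp TG
  have e1 : ∑ i, ∑ j, ((K i j : ℝ) : ℂ) • (ZM (ι := ι) i * ZM j + 1) =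
      (∑ i, ∑ j, ((K i j : ℝ) : ℂ) • (ZM (ι := ι) i * ZM j)) +
        (((∑ i, ∑ j, K i j : ℝ)) : ℂ) • 1 := by
    simp only [smul_add, Finset.sum_add_distrib]
    congr 1
    rw [Finset.sum_congr rfl fun (i : ι) (_ : i ∈ Finset.univ) =>
      (Finset.sum_smul (s := Finset.univ) (f := fun j => ((K i j : ℝ) : ℂ))
        (x := (1 : Matrix (ι → Bool) (ι → Bool) ℂ))).symm]
    rw [← Finset.sum_smul]
    congr 1
    push_cast
    rfl
  have e2 : ∑ i, (ZM (ι := ι) i + 1) =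
      (∑ i, ZM (ι := ι) i) + (((Fintype.card ι : ℝ)) : ℂ) • 1 := by
    rw [Finset.sum_add_distrib, Finset.sum_const, Finset.card_univ]
    congr 1
    rw [← Nat.cast_smul_eq_nsmul ℂ]
    push_cast
    rfl
  rw [e1, e2]
  push_cast
  simp only [smul_add, smul_smul]
  module

lemma A_decomp (K : ι → ι → ℝ) (h lam β : ℝ) :
    (-(β : ℂ)) • HamG K h lam +
      ((β * (2⁻¹ * (∑ i, ∑ j, K i j) + h * (Fintype.card ι)) : ℝ) : ℂ) • 1 =
      (β : ℂ) • TGp K h lam := by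
  unfold HamG
  rw [smul_neg, neg_smul, neg_neg, TGp_eq, smul_add, smul_smul]
  congr 2
  push_cast
  ring

/-- positivity of the partition function -/
lemma trace_expH_pos (K : ι → ι → ℝ) (h lam β : ℝ)
    (hK : ∀ i j, 0 ≤ K i j) (hh : 0 ≤ h) (hlam : 0 ≤ lam) (hβ : 0 ≤ β) :
    ∃ r : ℝ, 0 < r ∧
      (NormedSpace.exp ((-(β : ℂ)) • HamG K h lam)).trace = (r : ℂ) := by
  set c : ℝ := β * (2⁻¹ * (∑ i, ∑ j, K i j) + h * (Fintype.card ι)) with hc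
  have hNng : Nng ((β : ℂ) • TGp K h lam) := by
    have := Nng_TGp K h lam hK hh hlam
    simpa using Nng.smul hβ this
  rw [exp_eq_smul_exp_add_smul_one _ c, A_decomp]
  obtain ⟨r, hr, htr⟩ := trace_exp_nng_pos hNng
  refine ⟨Real.exp (-c) * r, by positivity, ?_⟩
  rw [Matrix.trace_smul, htr, smul_eq_mul]
  rw [← Complex.ofReal_neg, ← Complex.ofReal_exp]
  push_cast
  ring

end HamAlg

section GCW

variable {ι : Type*} [Fintype ι] [DecidableEq ι]

lemma sum_kron {α : Type*} {s : Finset α} (f : α → Matrix (ι → Bool) (ι → Bool) ℂ)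
    (B : Matrix (ι → Bool) (ι → Bool) ℂ) :
    (∑ a ∈ s, f a) ⊗ₖ B = ∑ a ∈ s, (f a ⊗ₖ B) := by
  ext p q
  simp only [kroneckerMap_apply, Matrix.sum_apply, Finset.sum_mul]

lemma kron_sum {α : Type*} {s : Finset α} (A : Matrix (ι → Bool) (ι → Bool) ℂ)
    (f : α → Matrix (ι → Bool) (ι → Bool) ℂ) :
    A ⊗ₖ (∑ a ∈ s, f a) = ∑ a ∈ s, (A ⊗ₖ f a) := by
  ext p q
  simp only [kroneckerMap_apply, Matrix.sum_apply, Finset.mul_sum]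

lemma GC.pow {M : Matrix ((ι → Bool) × (ι → Bool)) ((ι → Bool) × (ι → Bool)) ℂ}
    (hM : GC M) (n : ℕ) : GC (M ^ n) := by
  induction n with
  | zero => simpa [pow_zero] using (GC_one (ι := ι))
  | succ n ih => rw [pow_succ]; exact ih.mul hM

lemma GC_pair (i j : ι) (c c' : ℝ) (hc : 0 ≤ c) (hcc' : c ≤ c') :
    GC ((( c' : ℝ) : ℂ) • ((ZM i * ZM j) ⊗ₖ (1 : Matrix (ι → Bool) (ι → Bool) ℂ)) +
      ((c : ℝ) : ℂ) • ((1 : Matrix (ι → Bool) (ι → Bool) ℂ) ⊗ₖ (ZM i * ZM j))) := by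
  have hzz : (ZM i * ZM j) ⊗ₖ (1 : Matrix (ι → Bool) (ι → Bool) ℂ) =
      (ZM i ⊗ₖ (1 : Matrix (ι → Bool) (ι → Bool) ℂ)) *
        (ZM j ⊗ₖ (1 : Matrix (ι → Bool) (ι → Bool) ℂ)) := by
    simpa using Matrix.mul_kronecker_mul (ZM i) (ZM j)
      (1 : Matrix (ι → Bool) (ι → Bool) ℂ) 1
  have hww : (1 : Matrix (ι → Bool) (ι → Bool) ℂ) ⊗ₖ (ZM i * ZM j) =
      ((1 : Matrix (ι → Bool) (ι → Bool) ℂ) ⊗ₖ ZM i) *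
        ((1 : Matrix (ι → Bool) (ι → Bool) ℂ) ⊗ₖ ZM j) := by
    simpa using Matrix.mul_kronecker_mul (1 : Matrix (ι → Bool) (ι → Bool) ℂ) 1
      (ZM i) (ZM j)
  rw [hzz, hww]
  set a := ZM i ⊗ₖ (1 : Matrix (ι → Bool) (ι → Bool) ℂ)
  set b := (1 : Matrix (ι → Bool) (ι → Bool) ℂ) ⊗ₖ ZM i
  set a' := ZM j ⊗ₖ (1 : Matrix (ι → Bool) (ι → Bool) ℂ)
  set b' := (1 : Matrix (ι → Bool) (ι → Bool) ℂ) ⊗ₖ ZM j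
  have key : ((c' : ℝ) : ℂ) • (a * a') + ((c : ℝ) : ℂ) • (b * b') =
      ((((c' + c)/4 : ℝ)) : ℂ) • ((a + b) * (a' + b')) +
      ((((c' + c)/4 : ℝ)) : ℂ) • ((a - b) * (a' - b')) +
      ((((c' - c)/4 : ℝ)) : ℂ) • ((a + b) * (a' - b')) +
      ((((c' - c)/4 : ℝ)) : ℂ) • ((a - b) * (a' + b')) := by
    simp only [mul_add, add_mul, mul_sub, sub_mul, smul_add, smul_sub]
    push_cast
    module
  rw [key]
  have hq1 : (0:ℝ) ≤ (c' + c)/4 := by linarith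
  have hq2 : (0:ℝ) ≤ (c' - c)/4 := by linarith
  refine GC.add (GC.add (GC.add ?_ ?_) ?_) ?_
  · exact GC.smul hq1 ((GC_S i).mul (GC_S j))
  · exact GC.smul hq1 ((GC_D i).mul (GC_D j))
  · exact GC.smul hq2 ((GC_S i).mul (GC_D j))
  · exact GC.smul hq2 ((GC_D i).mul (GC_S j))

lemma GC_SX_pair (i : ι) :
    GC (SXM i ⊗ₖ (1 : Matrix (ι → Bool) (ι → Bool) ℂ) +
      (1 : Matrix (ι → Bool) (ι → Bool) ℂ) ⊗ₖ SXM i) := by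
  have hd : SXM i ⊗ₖ (1 : Matrix (ι → Bool) (ι → Bool) ℂ) +
      (1 : Matrix (ι → Bool) (ι → Bool) ℂ) ⊗ₖ SXM i =
      (((2:ℝ)⁻¹ : ℝ) : ℂ) • (((1 : Matrix ((ι → Bool) × (ι → Bool)) ((ι → Bool) × (ι → Bool)) ℂ) +
        (1 : Matrix ((ι → Bool) × (ι → Bool)) ((ι → Bool) × (ι → Bool)) ℂ)) +
        (XM i ⊗ₖ (1 : Matrix (ι → Bool) (ι → Bool) ℂ) +
          (1 : Matrix (ι → Bool) (ι → Bool) ℂ) ⊗ₖ XM i)) := by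
    unfold SXM
    rw [Matrix.smul_kronecker, Matrix.kronecker_smul, Matrix.add_kronecker,
      Matrix.kronecker_add, Matrix.one_kronecker_one]
    push_cast
    simp only [smul_add]
    abel
  rw [hd]
  exact GC.smul (by norm_num) (GC.add (GC.add GC_one GC_one) (GC_F i))

/-- cone membership for the doubled Hamiltonian -/
lemma GC_W (K K' : ι → ι → ℝ) (h lam β : ℝ)
    (hK : ∀ i j, 0 ≤ K i j) (hKK' : ∀ i j, K i j ≤ K' i j)
    (hh : 0 ≤ h) (hlam : 0 ≤ lam) (hβ : 0 ≤ β) :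
    GC (((-(β:ℂ)) • HamG K' h lam) ⊗ₖ (1 : Matrix (ι → Bool) (ι → Bool) ℂ) +
      (1 : Matrix (ι → Bool) (ι → Bool) ℂ) ⊗ₖ ((-(β:ℂ)) • HamG K h lam)) := by
  have hb : ∀ (K₀ : ι → ι → ℝ), (-(β:ℂ)) • HamG K₀ h lam = (β:ℂ) • TG K₀ h lam := by
    intro K₀
    unfold HamG
    rw [smul_neg, neg_smul, neg_neg]
  rw [hb, hb, Matrix.smul_kronecker, Matrix.kronecker_smul, ← smul_add]
  have hbc : ((β : ℝ) : ℂ) = (β : ℂ) := rfl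
  rw [← hbc]
  refine GC.smul hβ ?_
  have hdecomp : TG K' h lam ⊗ₖ (1 : Matrix (ι → Bool) (ι → Bool) ℂ) +
      (1 : Matrix (ι → Bool) (ι → Bool) ℂ) ⊗ₖ TG K h lam =
      (2:ℂ)⁻¹ • (∑ i, ∑ j, (((K' i j : ℝ) : ℂ) •
          ((ZM i * ZM j) ⊗ₖ (1 : Matrix (ι → Bool) (ι → Bool) ℂ)) +
        ((K i j : ℝ) : ℂ) • ((1 : Matrix (ι → Bool) (ι → Bool) ℂ) ⊗ₖ (ZM i * ZM j))))
      + ((h : ℝ) : ℂ) • (∑ i, (ZM i ⊗ₖ (1 : Matrix (ι → Bool) (ι → Bool) ℂ) +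
          (1 : Matrix (ι → Bool) (ι → Bool) ℂ) ⊗ₖ ZM i))
      + ((lam : ℝ) : ℂ) • (∑ i, (SXM i ⊗ₖ (1 : Matrix (ι → Bool) (ι → Bool) ℂ) +
          (1 : Matrix (ι → Bool) (ι → Bool) ℂ) ⊗ₖ SXM i)) := by
    unfold TG
    simp only [Matrix.add_kronecker, Matrix.kronecker_add, Matrix.smul_kronecker,
      Matrix.kronecker_smul, sum_kron, kron_sum]
    simp only [smul_add, Finset.sum_add_distrib]
    abel
  rw [hdecomp]
  have h2 : (2:ℂ)⁻¹ = (((2:ℝ)⁻¹ : ℝ) : ℂ) := by push_cast; ring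
  rw [h2]
  refine GC.add (GC.add ?_ ?_) ?_
  · exact GC.smul (by norm_num) (GC.sum fun i _ => GC.sum fun j _ =>
      GC_pair i j (K i j) (K' i j) (hK i j) (hKK' i j))
  · exact GC.smul hh (GC.sum fun i _ => GC_S i)
  · exact GC.smul hlam (GC.sum fun i _ => GC_SX_pair i)

end GCW

end Griff

end



open Matrix

noncomputable section

/-- **Monotonicity in the ferromagnetic couplings (Griffiths' second inequality,
consequence of (3.15)).** If `0 ≤ K ≤ K'` (entrywise, both symmetric), then
`⟨σ̂ᶻ_u⟩_{H(K)} ≤ ⟨σ̂ᶻ_u⟩_{H(K')}`. -/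
theorem magnetization_monotone_in_couplings
    (d : ℕ) (hd : 1 ≤ d) (N : ℕ) [NeZero N] (hN : 1 ≤ N)
    (β : ℝ) (hβ : 0 < β) (h lam : ℝ) (hh : 0 ≤ h) (hlam : 0 ≤ lam)
    (K K' : (Fin d → ZMod N) → (Fin d → ZMod N) → ℝ)
    (hKsymm : ∀ i j, K i j = K j i) (hK'symm : ∀ i j, K' i j = K' j i)
    (hKpos : ∀ i j, 0 ≤ K i j) (hK'pos : ∀ i j, 0 ≤ K' i j)
    (hKK' : ∀ i j, K i j ≤ K' i j)
    (u : Fin d → ZMod N) :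
    texp d N (HamK d N K h lam) β (sigmaZ d N u) ≤
      texp d N (HamK d N K' h lam) β (sigmaZ d N u) := by

  classical
  have hHG : ∀ K₀ : (Fin d → ZMod N) → (Fin d → ZMod N) → ℝ,
      HamK d N K₀ h lam = Griff.HamG K₀ h lam := fun _ => rfl
  have hZ : sigmaZ d N u = Griff.ZM u := rfl
  obtain ⟨r, hr, htr⟩ := Griff.trace_expH_pos K h lam β hKpos hh hlam hβ.le
  obtain ⟨r', hr', htr'⟩ := Griff.trace_expH_pos K' h lam β hK'pos hh hlam hβ.le
  set E : Op d N := expH d N (HamK d N K h lam) β with hE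
  set E' : Op d N := expH d N (HamK d N K' h lam) β with hE'
  have hEtr : E.trace = ((r : ℝ) : ℂ) := by
    rw [hE]
    show (NormedSpace.exp ((-(β:ℂ)) • HamK d N K h lam)).trace = _
    rw [hHG K]
    exact htr
  have hEtr' : E'.trace = ((r' : ℝ) : ℂ) := by
    rw [hE']
    show (NormedSpace.exp ((-(β:ℂ)) • HamK d N K' h lam)).trace = _
    rw [hHG K']
    exact htr'
  have htexp : texp d N (HamK d N K h lam) β (sigmaZ d N u) =
      ((sigmaZ d N u * E).trace).re / r := by
    unfold texp
    rw [← hE, hEtr, Complex.div_ofReal_re]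
  have htexp' : texp d N (HamK d N K' h lam) β (sigmaZ d N u) =
      ((sigmaZ d N u * E').trace).re / r' := by
    unfold texp
    rw [← hE', hEtr', Complex.div_ofReal_re]
  rw [htexp, htexp', div_le_div_iff₀ hr hr']
  set nn := (sigmaZ d N u * E).trace
  set nn' := (sigmaZ d N u * E').trace
  -- the doubled operator and the key positivity
  set A : Op d N := (-(β:ℂ)) • HamK d N K h lam with hA
  set A' : Op d N := (-(β:ℂ)) • HamK d N K' h lam with hA'
  set Dop := sigmaZ d N u ⊗ₖ (1 : Op d N) - (1 : Op d N) ⊗ₖ sigmaZ d N u with hDop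
  have hGCD : Griff.GC Dop := by
    rw [hDop, hZ]
    exact Griff.GC_D u
  have hGCW : Griff.GC (A' ⊗ₖ (1 : Op d N) + (1 : Op d N) ⊗ₖ A) := by
    rw [hA, hA', hHG K, hHG K']
    exact Griff.GC_W K K' h lam β hKpos hKK' hh hlam hβ.le
  have hEE : E' ⊗ₖ E = NormedSpace.exp (A' ⊗ₖ (1 : Op d N) + (1 : Op d N) ⊗ₖ A) := by
    rw [hE, hE']
    exact (Griff.kron_exp A' A).symm
  have key : 0 ≤ ((Dop * (E' ⊗ₖ E)).trace).re := by
    rw [hEE]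
    have hs := Griff.hasSum_trace_mul_exp Dop (A' ⊗ₖ (1 : Op d N) + (1 : Op d N) ⊗ₖ A)
    have hre := hs.map Complex.reAddGroupHom Complex.continuous_re
    have hnonneg : ∀ n : ℕ,
        0 ≤ (((n.factorial : ℂ))⁻¹ •
          (Dop * (A' ⊗ₖ (1 : Op d N) + (1 : Op d N) ⊗ₖ A) ^ n).trace).re := by
      intro n
      have : Griff.NRC (((n.factorial : ℂ))⁻¹ •
          (Dop * (A' ⊗ₖ (1 : Op d N) + (1 : Op d N) ⊗ₖ A) ^ n).trace) := by
        rw [smul_eq_mul]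
        exact (Griff.NRC_inv_factorial n).mul
          ((hGCD.mul (hGCW.pow n)).trace)
      exact this.re_nonneg
    calc (0:ℝ) ≤ ∑' n : ℕ, (((n.factorial : ℂ))⁻¹ •
          (Dop * (A' ⊗ₖ (1 : Op d N) + (1 : Op d N) ⊗ₖ A) ^ n).trace).re :=
        tsum_nonneg hnonneg
      _ = _ := hre.tsum_eq
  have hexpand : (Dop * (E' ⊗ₖ E)).trace = nn' * ((r : ℝ) : ℂ) - ((r' : ℝ) : ℂ) * nn := by
    have hm : Dop * (E' ⊗ₖ E) =
        (sigmaZ d N u * E') ⊗ₖ E - E' ⊗ₖ (sigmaZ d N u * E) := by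
      rw [hDop, Matrix.sub_mul]
      congr 1
      · have := Matrix.mul_kronecker_mul (sigmaZ d N u) E' (1 : Op d N) E
        rw [← this, one_mul]
      · have := Matrix.mul_kronecker_mul (1 : Op d N) E' (sigmaZ d N u) E
        rw [← this, one_mul]
    rw [hm, Matrix.trace_sub, Matrix.trace_kronecker, Matrix.trace_kronecker,
      hEtr, hEtr']
  have hre2 : ((Dop * (E' ⊗ₖ E)).trace).re = nn'.re * r - r' * nn.re := by
    rw [hexpand]
    simp [Complex.sub_re, Complex.mul_re, Complex.ofReal_re, Complex.ofReal_im]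
  rw [hre2] at key
  linarith [key]

end
end

section
/- First-passage percolation bound (inequality (5.5)): Fix d ≥ 1. There exist ε₀ > 0, c₁ > 0 and c₂ < ∞, depending only on d, with the following property. Let m ≥ 3, let V = (ℤ/mℤ) × ℤ^d be the lattice in which two vertices are adjacent iff they differ by ±1 (mod m) in the first coordinate or by a unit vector in the ℤ^d coordinate, let δ > 0, and let (X(r))_{r ∈ V} be i.i.d. random variables with P(X(r) = 0) = ε and P(X(r) = δ) = 1 − ε, where ε ≤ ε₀. For vertices p, q ∈ V let d(p,q) denote the minimal number of vertices contained in a nearest-neighbor path from p to q (including both endpoints), and let T(p,q) = min over nearest-neighbor paths γ from p to q of Σ_{r ∈ γ} X(r). Then for all p, q ∈ V: P( T(p,q) < (δ/2)·d(p,q) ) ≤ c₂ · exp(−c₁·d(p,q)). -/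
open MeasureTheory ProbabilityTheory List ENNReal

noncomputable section

/-- The vertex set `V = (ℤ/mℤ) × ℤ^d`. -/
abbrev Vtx (d m : ℕ) := ZMod m × (Fin d → ℤ)

/-- Adjacency on `V = (ℤ/mℤ) × ℤ^d`: two vertices are adjacent iff they differ
by `±1 (mod m)` in the first coordinate or by a unit vector in the `ℤ^d`
coordinate. -/
def VAdj (d m : ℕ) (p q : Vtx d m) : Prop :=
  (p.2 = q.2 ∧ (q.1 = p.1 + 1 ∨ q.1 = p.1 - 1)) ∨
  (p.1 = q.1 ∧ ∃ k : Fin d,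
    q.2 = Function.update p.2 k (p.2 k + 1) ∨
    q.2 = Function.update p.2 k (p.2 k - 1))

/-- A nearest-neighbor path from `p` to `q`: a nonempty finite sequence of
vertices starting at `p`, ending at `q`, with consecutive vertices adjacent. -/
def IsPath (d m : ℕ) (p q : Vtx d m) (γ : List (Vtx d m)) : Prop :=
  γ ≠ [] ∧ γ.head? = some p ∧ γ.getLast? = some q ∧ γ.Chain' (VAdj d m)

/-- `d(p,q)`: the minimal number of vertices contained in a nearest-neighbor
path from `p` to `q` (including both endpoints). -/
def vtxDist (d m : ℕ) (p q : Vtx d m) : ℕ :=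
  sInf { n : ℕ | ∃ γ, IsPath d m p q γ ∧ γ.length = n }

/-- The minimal passage time `T(p,q)` for site passage times `X`: the minimum
over nearest-neighbor paths `γ` from `p` to `q` of `Σ_{r ∈ γ} X(r)`. -/
def passageTime (d m : ℕ) (X : Vtx d m → ℝ) (p q : Vtx d m) : ℝ :=
  sInf { c : ℝ | ∃ γ, IsPath d m p q γ ∧ c = (γ.map X).sum }

/-! ### Auxiliary combinatorial lemmas -/

/-- List of potential neighbors of a vertex. -/
def nbrList (d m : ℕ) (p : Vtx d m) : List (Vtx d m) :=
  (p.1 + 1, p.2) :: (p.1 - 1, p.2) ::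
    (List.finRange d).flatMap fun k =>
      [(p.1, Function.update p.2 k (p.2 k + 1)), (p.1, Function.update p.2 k (p.2 k - 1))]

lemma length_nbrList (d m : ℕ) (p : Vtx d m) : (nbrList d m p).length = 2 * d + 2 := by
  simp [nbrList, List.length_flatMap, Function.comp_def]
  omega

lemma mem_nbrList_of_adj {d m : ℕ} {p q : Vtx d m} (h : VAdj d m p q) : q ∈ nbrList d m p := by
  rcases h with ⟨h2, h1 | h1⟩ | ⟨h1, k, h2 | h2⟩
  · simp only [nbrList, List.mem_cons]
    exact Or.inl (Prod.ext h1 h2.symm)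
  · simp only [nbrList, List.mem_cons]
    exact Or.inr (Or.inl (Prod.ext h1 h2.symm))
  · simp only [nbrList, List.mem_cons, List.mem_flatMap, List.mem_finRange]
    exact Or.inr (Or.inr ⟨k, by simp, by simp [Prod.ext_iff, h1, h2]⟩)
  · simp only [nbrList, List.mem_cons, List.mem_flatMap, List.mem_finRange]
    exact Or.inr (Or.inr ⟨k, by simp, by simp [Prod.ext_iff, h1, h2]⟩)

/-- Decode a list of directions into a path starting at `p`. -/
def decode (d m : ℕ) (p : Vtx d m) : List (Fin (2 * d + 2)) → List (Vtx d m)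
  | [] => [p]
  | j :: js => p :: decode d m ((nbrList d m p).get (Fin.cast (length_nbrList d m p).symm j)) js

lemma decode_length (d m : ℕ) (p : Vtx d m) (c : List (Fin (2 * d + 2))) :
    (decode d m p c).length = c.length + 1 := by
  induction c generalizing p with
  | nil => rfl
  | cons j js ih => simp [decode, ih]

lemma exists_code (d m : ℕ) (p : Vtx d m) (γ : List (Vtx d m)) (h0 : γ ≠ [])
    (h1 : γ.head? = some p) (h2 : γ.Chain' (VAdj d m)) :
    ∃ c, γ = decode d m p c := by
  induction γ generalizing p with
  | nil => exact absurd rfl h0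
  | cons a l ih =>
    have hap : a = p := by simpa using h1
    subst hap
    cases l with
    | nil => exact ⟨[], rfl⟩
    | cons b l' =>
      have hadj : VAdj d m a b := (List.isChain_cons_cons.mp h2).1
      have hchain : (b :: l').Chain' (VAdj d m) := (List.isChain_cons_cons.mp h2).2
      have hmem : b ∈ nbrList d m a := mem_nbrList_of_adj hadj
      obtain ⟨i, hi⟩ := List.mem_iff_get.mp hmem
      obtain ⟨c', hc'⟩ := ih (p := b) (by simp) (by simp) hchain
      refine ⟨Fin.cast (length_nbrList d m a) i :: c', ?_⟩
      simp only [decode]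
      congr 1
      rw [show (Fin.cast (length_nbrList d m a).symm (Fin.cast (length_nbrList d m a) i)) = i
        from rfl, hi]
      exact hc'

lemma dup_decomp {α : Type*} {l : List α} (h : ¬ l.Nodup) :
    ∃ (a : List α) (x : α) (b c : List α), l = a ++ x :: (b ++ x :: c) := by
  obtain ⟨x, hx⟩ := List.exists_duplicate_iff_not_nodup.mpr h
  have hs : [x, x] <+ l := List.duplicate_iff_sublist.mp hx
  clear hx h
  induction l with
  | nil => simp at hs
  | cons y t ih =>
    rcases hs with _ | @⟨_, _, _, hs⟩ | @⟨_, _, _, hs⟩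
    · obtain ⟨a, x', b, c, rfl⟩ := ih hs
      exact ⟨y::a, x', b, c, rfl⟩
    · have hm : x ∈ t := List.singleton_sublist.mp hs
      obtain ⟨b, c, rfl⟩ := List.append_of_mem hm
      exact ⟨[], x, b, c, rfl⟩

lemma shortcut_path {d m : ℕ} {p q : Vtx d m} {a b c : List (Vtx d m)} {x : Vtx d m}
    (h : IsPath d m p q (a ++ x :: (b ++ x :: c))) : IsPath d m p q (a ++ x :: c) := by
  obtain ⟨-, hh, hl, hc⟩ := h
  refine ⟨by simp, ?_, ?_, ?_⟩
  · cases a <;> simpa using hh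
  · rw [List.getLast?_append_cons] at hl ⊢
    rwa [show x :: (b ++ x :: c) = (x :: b) ++ x :: c by simp,
      List.getLast?_append_cons] at hl
  · rw [show a ++ x :: (b ++ x :: c) = (a ++ [x]) ++ (b ++ x :: c) by simp] at hc
    rw [show a ++ x :: c = (a ++ [x]) ++ c by simp]
    unfold List.Chain' at hc ⊢
    rw [List.isChain_append] at hc ⊢
    obtain ⟨h1, h2, h3⟩ := hc
    have h2' : List.Chain' (VAdj d m) (x :: c) := by
      have : x :: c <:+ b ++ x :: c := List.suffix_append _ _
      exact h2.suffix this
    refine ⟨h1, (List.isChain_cons.mp h2').2, ?_⟩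
    intro u hu y hy
    have hux : x = u := by simpa using hu
    subst hux
    exact (List.isChain_cons.mp h2').1 y hy

lemma exists_nodup_path (d m : ℕ) :
    ∀ (n : ℕ) (γ : List (Vtx d m)) (p q : Vtx d m), γ.length ≤ n → IsPath d m p q γ →
      ∃ γ', IsPath d m p q γ' ∧ γ'.Nodup ∧ γ' <+ γ := by
  intro n
  induction n with
  | zero =>
    intro γ p q hl h
    rw [Nat.le_zero, List.length_eq_zero_iff] at hl
    exact absurd hl h.1
  | succ n ih =>
    intro γ p q hl h
    by_cases hnd : γ.Nodup
    · exact ⟨γ, h, hnd, List.Sublist.refl γ⟩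
    · obtain ⟨a, x, b, c, rfl⟩ := dup_decomp hnd
      have hsub : a ++ x :: c <+ a ++ x :: (b ++ x :: c) := by
        refine List.Sublist.append_left ?_ a
        exact List.Sublist.cons₂ x
          ((List.sublist_cons_self x c).trans (List.sublist_append_right b (x :: c)))
      have hlen : (a ++ x :: c).length ≤ n := by
        simp only [List.length_append, List.length_cons] at hl ⊢
        omega
      obtain ⟨γ', h1, h2, h3⟩ := ih _ p q hlen (shortcut_path h)
      exact ⟨γ', h1, h2, h3.trans hsub⟩

lemma sum_map_le_of_sublist {α : Type*} {f : α → ℝ} {l₁ l₂ : List α} (h : l₁ <+ l₂)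
    (hf : ∀ a ∈ l₂, 0 ≤ f a) : (l₁.map f).sum ≤ (l₂.map f).sum := by
  induction h with
  | slnil => simp
  | cons a h ih =>
    simp only [List.map_cons, List.sum_cons]
    have := hf a (List.mem_cons_self)
    have := ih (fun b hb => hf b (List.mem_cons_of_mem _ hb))
    linarith
  | cons_cons a h ih =>
    simp only [List.map_cons, List.sum_cons]
    have := ih (fun b hb => hf b (List.mem_cons_of_mem _ hb))
    linarith

open Classical in
/-- Number of elements of `γ` (with multiplicity) on which `f` vanishes. -/
def zeroCount {α : Type*} (f : α → ℝ) (γ : List α) : ℕ :=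
  (γ.filter (fun r => f r = 0)).length

lemma sum_map_eq {α : Type*} (f : α → ℝ) (δ : ℝ) :
    ∀ (γ : List α), (∀ r ∈ γ, f r = 0 ∨ f r = δ) →
      (γ.map f).sum = δ * γ.length - δ * zeroCount f γ := by
  classical
  intro γ
  induction γ with
  | nil => simp [zeroCount]
  | cons r t ih =>
    intro h
    have ht := ih (fun s hs => h s (List.mem_cons_of_mem _ hs))
    rcases h r (List.mem_cons_self) with h0 | hδ
    · have : zeroCount f (r :: t) = zeroCount f t + 1 := by
        simp [zeroCount, List.filter_cons, h0]
      rw [List.map_cons, List.sum_cons, h0, this, ht]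
      simp only [List.length_cons]
      push_cast
      ring
    · by_cases hδ0 : f r = 0
      · have : zeroCount f (r :: t) = zeroCount f t + 1 := by
          simp [zeroCount, List.filter_cons, hδ0]
        rw [List.map_cons, List.sum_cons, hδ0, this, ht]
        simp only [List.length_cons]
        push_cast
        ring
      · have : zeroCount f (r :: t) = zeroCount f t := by
          simp [zeroCount, List.filter_cons, hδ0]
        rw [List.map_cons, List.sum_cons, hδ, this, ht]
        simp only [List.length_cons]
        push_cast
        ring

lemma choose_le_two_pow (n k : ℕ) : n.choose k ≤ 2 ^ n := by
  by_cases h : k ≤ n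
  · calc n.choose k ≤ ∑ m ∈ Finset.range (n + 1), n.choose m :=
        Finset.single_le_sum (fun i _ => Nat.zero_le _)
          (Finset.mem_range.mpr (Nat.lt_succ_of_le h))
    _ = 2 ^ n := Nat.sum_range_choose n
  · rw [Nat.choose_eq_zero_of_lt (lt_of_not_ge h)]
    exact Nat.zero_le _

/-! ### Probabilistic lemmas -/

section Prob

variable {Ω : Type} [mΩ : MeasurableSpace Ω] {μ : Measure Ω}

lemma meas_biInter_zero {ι : Type*} {X : ι → Ω → ℝ} {ε : ℝ}
    (hind : iIndepFun X μ)
    (hzero : ∀ r, μ { ω | X r ω = 0 } = ENNReal.ofReal ε) (S : Finset ι) :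
    μ (⋂ r ∈ S, { ω | X r ω = 0 }) = ENNReal.ofReal ε ^ S.card := by
  have h := hind.measure_inter_preimage_eq_mul S
    (sets := fun _ => ({0} : Set ℝ)) (fun i _ => measurableSet_singleton 0)
  have heq : ∀ r : ι, X r ⁻¹' ({0} : Set ℝ) = { ω | X r ω = 0 } := fun r => rfl
  simp only [heq] at h
  rw [h]
  rw [Finset.prod_congr rfl (fun r _ => hzero r), Finset.prod_const]

lemma meas_list_event_le {ι : Type*} [DecidableEq ι] {X : ι → Ω → ℝ} {ε : ℝ}
    (hε0 : 0 ≤ ε) (hε1 : ε ≤ 1)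
    (hind : iIndepFun X μ)
    (hzero : ∀ r, μ { ω | X r ω = 0 } = ENNReal.ofReal ε) (γ : List ι) :
    μ { ω | γ.Nodup ∧ γ.length < 2 * zeroCount (fun r => X r ω) γ }
      ≤ (2 * ENNReal.ofReal (Real.sqrt ε)) ^ γ.length := by
  classical
  by_cases hnd : γ.Nodup
  · set n := γ.length with hn
    set k₀ := n / 2 + 1 with hk₀
    set s := ENNReal.ofReal (Real.sqrt ε) with hs
    have hs1 : s ≤ 1 := by
      rw [hs, ← ENNReal.ofReal_one]
      exact ENNReal.ofReal_le_ofReal (by simpa using Real.sqrt_le_sqrt hε1)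
    have hes : ENNReal.ofReal ε = s ^ 2 := by
      rw [hs, ← ENNReal.ofReal_pow (Real.sqrt_nonneg ε), Real.sq_sqrt hε0]
    have hsubset : { ω | γ.Nodup ∧ γ.length < 2 * zeroCount (fun r => X r ω) γ }
        ⊆ ⋃ S ∈ γ.toFinset.powersetCard k₀, ⋂ r ∈ S, { ω | X r ω = 0 } := by
      rintro ω ⟨-, hZ⟩
      set Z := zeroCount (fun r => X r ω) γ with hZdef
      have hk₀Z : k₀ ≤ Z := by omega
      set T := (γ.filter (fun r => X r ω = 0)).toFinset with hT
      have hTcard : T.card = Z := by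
        rw [hT, List.toFinset_card_of_nodup (hnd.filter _)]
        simp [hZdef, zeroCount]
      obtain ⟨S, hST, hScard⟩ := Finset.exists_subset_card_eq (hTcard ▸ hk₀Z)
      refine Set.mem_iUnion₂.mpr ⟨S, ?_, ?_⟩
      · refine Finset.mem_powersetCard.mpr ⟨hST.trans ?_, hScard⟩
        intro r hr
        rw [hT, List.mem_toFinset] at hr
        exact List.mem_toFinset.mpr (List.mem_of_mem_filter hr)
      · refine Set.mem_iInter₂.mpr fun r hr => ?_
        have hrT := hST hr
        rw [hT, List.mem_toFinset, List.mem_filter] at hrT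
        simpa using hrT.2
    calc μ { ω | γ.Nodup ∧ γ.length < 2 * zeroCount (fun r => X r ω) γ }
        ≤ μ (⋃ S ∈ γ.toFinset.powersetCard k₀, ⋂ r ∈ S, { ω | X r ω = 0 }) :=
          measure_mono hsubset
      _ ≤ ∑ S ∈ γ.toFinset.powersetCard k₀, μ (⋂ r ∈ S, { ω | X r ω = 0 }) :=
          measure_biUnion_finset_le _ _
      _ = ∑ S ∈ γ.toFinset.powersetCard k₀, ENNReal.ofReal ε ^ S.card := by
          refine Finset.sum_congr rfl fun S _ => meas_biInter_zero hind hzero S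
      _ = (γ.toFinset.powersetCard k₀).card • (ENNReal.ofReal ε ^ k₀) := by
          rw [← Finset.sum_const]
          refine Finset.sum_congr rfl fun S hS => ?_
          rw [(Finset.mem_powersetCard.mp hS).2]
      _ = (n.choose k₀ : ℕ) * (ENNReal.ofReal ε ^ k₀) := by
          rw [Finset.card_powersetCard, List.toFinset_card_of_nodup hnd, nsmul_eq_mul]
      _ ≤ (2 ^ n : ℕ) * s ^ n := by
          refine mul_le_mul' (by exact_mod_cast Nat.cast_le.mpr (choose_le_two_pow n k₀)) ?_
          rw [hes, ← pow_mul]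
          exact pow_le_pow_right_of_le_one' hs1 (by omega)
      _ = (2 * s) ^ n := by
          rw [mul_pow]
          norm_cast
  · have : { ω | γ.Nodup ∧ γ.length < 2 * zeroCount (fun r => X r ω) γ } = ∅ := by
      ext ω; simp [hnd]
    rw [this, measure_empty]
    exact zero_le

end Prob

/-- **First-passage percolation bound (5.5).** For i.i.d. Bernoulli site passage
times taking value `0` with probability `ε ≤ ε₀` and `δ` with probability
`1 − ε` on `(ℤ/mℤ) × ℤ^d`, the probability that `T(p,q) < (δ/2)·d(p,q)` is at
most `c₂·exp(−c₁·d(p,q))`, with `ε₀, c₁, c₂` depending only on `d`. -/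
theorem fpp_passage_time_bound (d : ℕ) (hd : 1 ≤ d) :
    ∃ ε₀ c₁ c₂ : ℝ, 0 < ε₀ ∧ 0 < c₁ ∧
      ∀ (m : ℕ), 3 ≤ m → ∀ (δ : ℝ), 0 < δ →
        ∀ (Ω : Type) (mΩ : MeasurableSpace Ω) (μ : Measure Ω),
          IsProbabilityMeasure μ →
          ∀ (X : Vtx d m → Ω → ℝ) (ε : ℝ), 0 ≤ ε → ε ≤ ε₀ →
            (∀ r, Measurable (X r)) →
            iIndepFun X μ →
            (∀ r, μ { ω | X r ω = 0 } = ENNReal.ofReal ε) →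
            (∀ r, μ { ω | X r ω = δ } = ENNReal.ofReal (1 - ε)) →
            ∀ p q : Vtx d m,
              μ { ω | passageTime d m (fun r => X r ω) p q <
                    (δ / 2) * (vtxDist d m p q : ℝ) } ≤
                ENNReal.ofReal (c₂ * Real.exp (-c₁ * (vtxDist d m p q : ℝ))) := by
  classical
  set K : ℕ := 2 * d + 2 with hK
  refine ⟨((8 * K : ℝ))⁻¹ ^ 2, Real.log 2, 2, by positivity, Real.log_pos (by norm_num), ?_⟩
  intro m hm δ hδ Ω mΩ μ hμ X ε hε0 hεε₀ hmeas hind hzero hone p q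
  haveI : NeZero m := ⟨by omega⟩
  haveI hcV : Countable (Vtx d m) := inferInstance
  have hK1 : (1:ℝ) ≤ (K:ℝ) := by
    have : 1 ≤ K := by omega
    exact_mod_cast this
  have hε₀le : ((8 * K : ℝ))⁻¹ ^ 2 ≤ 1 := by
    have h8K : (1:ℝ) ≤ 8 * K := by nlinarith
    have h1 : ((8 * K : ℝ))⁻¹ ≤ 1 := inv_le_one_of_one_le₀ h8K
    have h2 : (0:ℝ) ≤ ((8 * K : ℝ))⁻¹ := by positivity
    nlinarith
  have hε1 : ε ≤ 1 := hεε₀.trans hε₀le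
  have hDdef : vtxDist d m p q = sInf { n : ℕ | ∃ γ, IsPath d m p q γ ∧ γ.length = n } := rfl
  by_cases hS : ∃ γ₀, IsPath d m p q γ₀
  swap
  · -- no path at all: the event is empty
    push_neg at hS
    have hempty : { n : ℕ | ∃ γ, IsPath d m p q γ ∧ γ.length = n } = ∅ := by
      ext n
      simp only [Set.mem_setOf_eq, Set.mem_empty_iff_false, iff_false, not_exists]
      exact fun γ h => (hS γ) h.1
    have hD0 : vtxDist d m p q = 0 := by rw [hDdef, hempty, Nat.sInf_empty]
    have hTempty : ∀ ω : Ω,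
        { c : ℝ | ∃ γ, IsPath d m p q γ ∧ c = (γ.map (fun r => X r ω)).sum } = ∅ := by
      intro ω
      ext x
      simp only [Set.mem_setOf_eq, Set.mem_empty_iff_false, iff_false, not_exists]
      exact fun γ h => (hS γ) h.1
    have hEe : { ω | passageTime d m (fun r => X r ω) p q <
        (δ / 2) * (vtxDist d m p q : ℝ) } = ∅ := by
      ext ω
      simp only [Set.mem_setOf_eq, Set.mem_empty_iff_false, iff_false, not_lt]
      rw [show passageTime d m (fun r => X r ω) p q
          = sInf { c : ℝ | ∃ γ, IsPath d m p q γ ∧ c = (γ.map (fun r => X r ω)).sum } from rfl,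
        hTempty ω, Real.sInf_empty, hD0]
      simp
    rw [hEe, measure_empty]
    exact zero_le
  obtain ⟨γ₀, hγ₀⟩ := hS
  -- basic properties of the graph distance
  have hSne : { n : ℕ | ∃ γ, IsPath d m p q γ ∧ γ.length = n }.Nonempty :=
    ⟨γ₀.length, γ₀, hγ₀, rfl⟩
  have hD1 : 1 ≤ vtxDist d m p q := by
    have hmem := Nat.sInf_mem hSne
    rw [← hDdef] at hmem
    obtain ⟨γ, hγ, hlen⟩ := hmem
    have := List.length_pos_iff.mpr hγ.1
    omega
  have hDle : ∀ γ, IsPath d m p q γ → vtxDist d m p q ≤ γ.length := by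
    intro γ h
    rw [hDdef]
    exact Nat.sInf_le ⟨γ, h, rfl⟩
  -- the bad (null) event where some passage time is neither 0 nor δ
  set Bad : Set Ω := ⋃ r : Vtx d m, { ω | ¬ (X r ω = 0 ∨ X r ω = δ) } with hBad
  have hBad0 : μ Bad = 0 := by
    rw [hBad]
    refine measure_iUnion_null fun r => ?_
    have hm0 : MeasurableSet { ω | X r ω = 0 } := hmeas r (measurableSet_singleton 0)
    have hm1 : MeasurableSet { ω | X r ω = δ } := hmeas r (measurableSet_singleton δ)
    have hdisj : Disjoint { ω | X r ω = 0 } { ω | X r ω = δ } := by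
      rw [Set.disjoint_left]
      intro ω h0 h1
      simp only [Set.mem_setOf_eq] at h0 h1
      rw [h0] at h1
      exact absurd h1.symm (ne_of_gt hδ)
    have hun : μ ({ ω | X r ω = 0 } ∪ { ω | X r ω = δ }) = 1 := by
      rw [measure_union hdisj hm1, hzero r, hone r,
        ← ENNReal.ofReal_add hε0 (by linarith)]
      norm_num
    have hcompl : { ω | ¬ (X r ω = 0 ∨ X r ω = δ) }
        = ({ ω | X r ω = 0 } ∪ { ω | X r ω = δ })ᶜ := by
      ext ω
      simp [not_or]
    rw [hcompl, measure_compl (hm0.union hm1) (measure_ne_top μ _), hun, measure_univ,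
      tsub_self]
  -- the per-code events
  set s : ℝ≥0∞ := ENNReal.ofReal (Real.sqrt ε) with hs
  set F : List (Fin (2 * d + 2)) → Set Ω := fun c =>
    { ω | vtxDist d m p q ≤ c.length + 1 ∧ (decode d m p c).Nodup ∧
        (decode d m p c).length < 2 * zeroCount (fun r => X r ω) (decode d m p c) } with hF
  -- inclusion of the event in the union of Bad and the per-code events
  have hincl : { ω | passageTime d m (fun r => X r ω) p q <
        (δ / 2) * (vtxDist d m p q : ℝ) } ⊆ Bad ∪ ⋃ c : List (Fin (2 * d + 2)), F c := by
    intro ω hω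
    by_cases hb : ω ∈ Bad
    · exact Or.inl hb
    right
    have hgood : ∀ r, X r ω = 0 ∨ X r ω = δ := by
      rw [hBad] at hb
      intro r
      by_contra hr
      exact hb (Set.mem_iUnion.mpr ⟨r, hr⟩)
    have hnonneg : ∀ r, 0 ≤ X r ω := by
      intro r
      rcases hgood r with h | h <;> rw [h] <;> linarith
    have hSums_ne : { c : ℝ | ∃ γ, IsPath d m p q γ ∧
        c = (γ.map (fun r => X r ω)).sum }.Nonempty := ⟨_, γ₀, hγ₀, rfl⟩
    have hlt : sInf { c : ℝ | ∃ γ, IsPath d m p q γ ∧ c = (γ.map (fun r => X r ω)).sum }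
        < (δ / 2) * (vtxDist d m p q : ℝ) := hω
    obtain ⟨x, ⟨γ, hγ, rfl⟩, hx⟩ := exists_lt_of_csInf_lt hSums_ne hlt
    obtain ⟨γ', hγ', hnd, hsub⟩ := exists_nodup_path d m γ.length γ p q le_rfl hγ
    have hsum' : (γ'.map (fun r => X r ω)).sum ≤ (γ.map (fun r => X r ω)).sum :=
      sum_map_le_of_sublist hsub (fun a _ => hnonneg a)
    obtain ⟨c, hc⟩ := exists_code d m p γ' hγ'.1 hγ'.2.1 hγ'.2.2.2
    have hlen' : γ'.length = c.length + 1 := by rw [hc, decode_length]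
    have hDle' : vtxDist d m p q ≤ γ'.length := hDle γ' hγ'
    have hsum_eq : (γ'.map (fun r => X r ω)).sum
        = δ * γ'.length - δ * zeroCount (fun r => X r ω) γ' :=
      sum_map_eq _ δ γ' (fun r _ => hgood r)
    have hZlt : (γ'.length : ℝ) < 2 * (zeroCount (fun r => X r ω) γ' : ℝ) := by
      have h1 : (vtxDist d m p q : ℝ) ≤ (γ'.length : ℝ) := by exact_mod_cast hDle'
      have h2 : δ * γ'.length - δ * zeroCount (fun r => X r ω) γ'
          < (δ / 2) * (vtxDist d m p q : ℝ) := by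
        rw [← hsum_eq]
        exact lt_of_le_of_lt hsum' hx
      nlinarith
    have hZlt' : γ'.length < 2 * zeroCount (fun r => X r ω) γ' := by exact_mod_cast hZlt
    refine Set.mem_iUnion.mpr ⟨c, ?_⟩
    rw [hF]
    exact ⟨by omega, by rw [← hc]; exact hnd, by rw [← hc]; exact hZlt'⟩
  -- per-code measure bound
  have hFle : ∀ c : List (Fin (2 * d + 2)), μ (F c) ≤
      (if vtxDist d m p q ≤ c.length + 1 then (2 * s) ^ (c.length + 1) else 0) := by
    intro c
    by_cases hcD : vtxDist d m p q ≤ c.length + 1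
    · rw [if_pos hcD]
      have hsubF : F c ⊆ { ω | (decode d m p c).Nodup ∧
          (decode d m p c).length < 2 * zeroCount (fun r => X r ω) (decode d m p c) } :=
        fun ω h => ⟨h.2.1, h.2.2⟩
      refine (measure_mono hsubF).trans ?_
      have hb := meas_list_event_le hε0 hε1 hind hzero (decode d m p c)
      calc μ { ω | (decode d m p c).Nodup ∧
            (decode d m p c).length < 2 * zeroCount (fun r => X r ω) (decode d m p c) }
          ≤ (2 * ENNReal.ofReal (Real.sqrt ε)) ^ (decode d m p c).length := hb
        _ = (2 * s) ^ (c.length + 1) := by rw [decode_length, hs]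
    · rw [if_neg hcD]
      have hFem : F c = ∅ := by
        ext ω
        simp [hF, hcD]
      simp [hFem]
  -- arithmetic facts about s
  have hsqrt : Real.sqrt ε ≤ ((8 * K : ℝ))⁻¹ := by
    have h1 := Real.sqrt_le_sqrt hεε₀
    rwa [Real.sqrt_sq (by positivity)] at h1
  have h8Kpos : (0:ℝ) < 8 * K := by positivity
  have hkey : (K:ℝ) * (2 * Real.sqrt ε) ≤ 4⁻¹ := by
    have h1 : (8*K:ℝ) * Real.sqrt ε ≤ 1 := by
      have h2 := mul_le_mul_of_nonneg_left hsqrt (le_of_lt h8Kpos)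
      rwa [mul_inv_cancel₀ (ne_of_gt h8Kpos)] at h2
    nlinarith
  have hKs : (K : ℝ≥0∞) * (2 * s) ≤ 4⁻¹ := by
    have heq : (K : ℝ≥0∞) * (2 * s) = ENNReal.ofReal ((K:ℝ) * (2 * Real.sqrt ε)) := by
      rw [ENNReal.ofReal_mul (by positivity), ENNReal.ofReal_mul (by norm_num),
        ENNReal.ofReal_natCast, ENNReal.ofReal_ofNat, hs]
    rw [heq]
    calc ENNReal.ofReal ((K:ℝ) * (2 * Real.sqrt ε)) ≤ ENNReal.ofReal ((4:ℝ)⁻¹) :=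
          ENNReal.ofReal_le_ofReal hkey
      _ = 4⁻¹ := by rw [ENNReal.ofReal_inv_of_pos (by norm_num), ENNReal.ofReal_ofNat]
  have h2s : 2 * s ≤ 4⁻¹ := by
    have hK1' : (1:ℝ≥0∞) ≤ (K : ℝ≥0∞) := by
      have : 1 ≤ K := by omega
      exact_mod_cast this
    calc 2 * s = 1 * (2 * s) := (one_mul _).symm
      _ ≤ (K : ℝ≥0∞) * (2 * s) := mul_le_mul_left hK1' _
      _ ≤ 4⁻¹ := hKs
  have hmain : ∀ l : ℕ, (K : ℝ≥0∞) ^ l * (2 * s) ^ (l + 1) ≤ (4⁻¹ : ℝ≥0∞) ^ (l + 1) := by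
    intro l
    calc (K : ℝ≥0∞) ^ l * (2 * s) ^ (l + 1)
        = (2 * s) * ((K : ℝ≥0∞) * (2 * s)) ^ l := by
          rw [mul_pow, pow_succ']
          ring
      _ ≤ 4⁻¹ * (4⁻¹ : ℝ≥0∞) ^ l := mul_le_mul' h2s (pow_le_pow_left' hKs l)
      _ = (4⁻¹ : ℝ≥0∞) ^ (l + 1) := (pow_succ' _ _).symm
  -- put everything together
  have hstep : μ { ω | passageTime d m (fun r => X r ω) p q <
        (δ / 2) * (vtxDist d m p q : ℝ) } ≤ ∑' c : List (Fin (2 * d + 2)), μ (F c) :=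
    calc μ { ω | passageTime d m (fun r => X r ω) p q <
        (δ / 2) * (vtxDist d m p q : ℝ) } ≤ μ (Bad ∪ ⋃ c, F c) := measure_mono hincl
      _ ≤ μ Bad + μ (⋃ c, F c) := measure_union_le _ _
      _ = μ (⋃ c, F c) := by rw [hBad0, zero_add]
      _ ≤ ∑' c, μ (F c) := measure_iUnion_le _
  have h4eq : (4⁻¹ : ℝ≥0∞) = 2⁻¹ * 2⁻¹ := by
    rw [show (4:ℝ≥0∞) = 2 * 2 by norm_num,
      ENNReal.mul_inv (Or.inl two_ne_zero) (Or.inl ENNReal.ofNat_ne_top)]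
  have hhalf : (2⁻¹ : ℝ≥0∞) ≤ 1 := ENNReal.inv_le_one.mpr one_le_two
  have htsum : ∑' c : List (Fin (2 * d + 2)), μ (F c)
      ≤ (2⁻¹ : ℝ≥0∞) ^ vtxDist d m p q := by
    calc ∑' c : List (Fin (2 * d + 2)), μ (F c)
        ≤ ∑' c : List (Fin (2 * d + 2)),
            (if vtxDist d m p q ≤ c.length + 1 then (2 * s) ^ (c.length + 1) else 0) :=
          ENNReal.tsum_le_tsum hFle
      _ = ∑' (x : Σ n : ℕ, Fin n → Fin (2 * d + 2)),
            (if vtxDist d m p q ≤ (List.ofFn x.2).length + 1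
              then (2 * s) ^ ((List.ofFn x.2).length + 1) else 0) :=
          (Equiv.tsum_eq (List.equivSigmaTuple (α := Fin (2 * d + 2))).symm
            (fun c => if vtxDist d m p q ≤ c.length + 1
              then (2 * s) ^ (c.length + 1) else 0)).symm
      _ = ∑' (x : Σ n : ℕ, Fin n → Fin (2 * d + 2)),
            (if vtxDist d m p q ≤ x.1 + 1 then (2 * s) ^ (x.1 + 1) else 0) :=
          tsum_congr fun x => by rw [List.length_ofFn]
      _ = ∑' (n : ℕ), ∑' (v : Fin n → Fin (2 * d + 2)),
            (if vtxDist d m p q ≤ n + 1 then (2 * s) ^ (n + 1) else 0) :=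
          ENNReal.tsum_sigma' _
      _ = ∑' (n : ℕ),
            (K : ℝ≥0∞) ^ n * (if vtxDist d m p q ≤ n + 1 then (2 * s) ^ (n + 1) else 0) := by
          refine tsum_congr fun n => ?_
          rw [tsum_fintype, Finset.sum_const, Finset.card_univ, Fintype.card_fun,
            Fintype.card_fin, Fintype.card_fin, nsmul_eq_mul]
          norm_cast
      _ ≤ ∑' (n : ℕ), (2⁻¹ : ℝ≥0∞) ^ vtxDist d m p q * (2⁻¹ : ℝ≥0∞) ^ (n + 1) := by
          refine ENNReal.tsum_le_tsum fun n => ?_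
          by_cases hn : vtxDist d m p q ≤ n + 1
          · rw [if_pos hn]
            calc (K : ℝ≥0∞) ^ n * (2 * s) ^ (n + 1) ≤ (4⁻¹ : ℝ≥0∞) ^ (n + 1) := hmain n
              _ = (2⁻¹ : ℝ≥0∞) ^ (n + 1) * (2⁻¹ : ℝ≥0∞) ^ (n + 1) := by
                  rw [← mul_pow, ← h4eq]
              _ ≤ (2⁻¹ : ℝ≥0∞) ^ vtxDist d m p q * (2⁻¹ : ℝ≥0∞) ^ (n + 1) :=
                  mul_le_mul_left (pow_le_pow_right_of_le_one' hhalf hn) _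
          · rw [if_neg hn]
            simp
      _ = (2⁻¹ : ℝ≥0∞) ^ vtxDist d m p q * ∑' (n : ℕ), (2⁻¹ : ℝ≥0∞) ^ (n + 1) :=
          ENNReal.tsum_mul_left
      _ ≤ (2⁻¹ : ℝ≥0∞) ^ vtxDist d m p q * 1 := by
          refine mul_le_mul_right ?_ _
          have hres : ∑' (n : ℕ), (2⁻¹ : ℝ≥0∞) ^ (n + 1)
              = 2⁻¹ * ∑' (n : ℕ), (2⁻¹ : ℝ≥0∞) ^ n := by
            rw [← ENNReal.tsum_mul_left]
            exact tsum_congr fun n => pow_succ' _ _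
          rw [hres, ENNReal.tsum_geometric, ENNReal.one_sub_inv_two, inv_inv]
          exact le_of_eq (ENNReal.inv_mul_cancel two_ne_zero ENNReal.ofNat_ne_top)
      _ = (2⁻¹ : ℝ≥0∞) ^ vtxDist d m p q := mul_one _
  refine hstep.trans (htsum.trans ?_)
  have hhalfD : (2⁻¹ : ℝ≥0∞) ^ vtxDist d m p q
      = ENNReal.ofReal ((2⁻¹ : ℝ) ^ vtxDist d m p q) := by
    rw [ENNReal.ofReal_pow (by norm_num), ENNReal.ofReal_inv_of_pos (by norm_num),
      ENNReal.ofReal_ofNat]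
  rw [hhalfD]
  apply ENNReal.ofReal_le_ofReal
  have hexp : Real.exp (-Real.log 2 * (vtxDist d m p q : ℝ))
      = (2⁻¹ : ℝ) ^ vtxDist d m p q := by
    rw [neg_mul, Real.exp_neg, mul_comm, Real.exp_nat_mul,
      Real.exp_log (by norm_num : (0:ℝ) < 2), ← inv_pow]
  rw [hexp]
  have hpos := pow_pos (show (0:ℝ) < 2⁻¹ by norm_num) (vtxDist d m p q)
  linarith

end
end
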